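/- arXiv:2512.14199 — 5 statements merged into one kernel-verified Lean document; each statement's English description precedes it below -/
import Mathlib

section
/- The parking function polytope equals the signed Minkowski sum Σ_{∅≠I⊆[n]} y_I · Δ_I^0; precisely, PF(u) + Σ_{I : y_I < 0} (−y_I) · Δ_I^0 = Σ_{I : y_I ≥ 0} y_I · Δ_I^0, where + denotes Minkowski sum of sets, λ·A = {λ a : a ∈ A}, and both sums range over nonempty subsets I of [n]. -/
noncomputable section

open Pointwise

/-- `a` is a `u`-parking function. -/
def IsParkingFunction (n : ℕ) (u a : Fin n → ℝ) : Prop :=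
  (∀ i, 0 ≤ a i) ∧
    ∃ σ : Equiv.Perm (Fin n), Monotone (fun i => a (σ i)) ∧ ∀ i, a (σ i) ≤ u i

/-- The parking function polytope. -/
def PF (n : ℕ) (u : Fin n → ℝ) : Set (Fin n → ℝ) :=
  convexHull ℝ {a | IsParkingFunction n u a}

/-- The coordinates of `u`, extended by `0` (so `Uext n u k = u_{k+1}`,
1-indexed, for `k < n`). -/
def Uext (n : ℕ) (u : Fin n → ℝ) : ℕ → ℝ := fun k => if h : k < n then u ⟨k, h⟩ else 0

/-- `y_I` for a set of cardinality `k`: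
`y = ∑_{j=0}^{k-1} C(k-1, j) (-1)^j u_{k-j}` (1-indexed `u`). -/
def ysub (n : ℕ) (u : Fin n → ℝ) (k : ℕ) : ℝ :=
  ∑ j ∈ Finset.range k, ((k - 1).choose j : ℝ) * (-1) ^ j * Uext n u (k - 1 - j)

/-- The simplex `Δ_I⁰ = conv({0} ∪ {e_i : i ∈ I})`. -/
def simplex0 (n : ℕ) (I : Finset (Fin n)) : Set (Fin n → ℝ) :=
  convexHull ℝ (insert (0 : Fin n → ℝ) {x | ∃ i ∈ I, x = Pi.single i (1 : ℝ)})

open Finset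




/-- dot product as a continuous linear map -/
def dotL (n : ℕ) (w : Fin n → ℝ) : (Fin n → ℝ) →L[ℝ] ℝ :=
  ∑ i, w i • ContinuousLinearMap.proj i

lemma dotL_apply (n : ℕ) (w x : Fin n → ℝ) : dotL n w x = ∑ i, w i * x i := by
  simp [dotL, ContinuousLinearMap.sum_apply]

/-- support function -/
def hsup (n : ℕ) (w : Fin n → ℝ) (A : Set (Fin n → ℝ)) : ℝ := sSup (dotL n w '' A)

lemma hsup_add {n : ℕ} (w : Fin n → ℝ) {A B : Set (Fin n → ℝ)}
    (hA : IsCompact A) (hA0 : A.Nonempty) (hB : IsCompact B) (hB0 : B.Nonempty) :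
    hsup n w (A + B) = hsup n w A + hsup n w B := by
  unfold hsup
  rw [Set.image_add (dotL n w)]
  exact csSup_add (hA0.image _) ((hA.image (dotL n w).continuous).bddAbove)
    (hB0.image _) ((hB.image (dotL n w).continuous).bddAbove)

lemma hsup_singleton_zero {n : ℕ} (w : Fin n → ℝ) : hsup n w {0} = 0 := by
  simp [hsup, Set.image_singleton]

lemma hsup_smul {n : ℕ} (w : Fin n → ℝ) {A : Set (Fin n → ℝ)} {c : ℝ} (hc : 0 ≤ c)
    (hA : IsCompact A) (hA0 : A.Nonempty) :
    hsup n w (c • A) = c * hsup n w A := by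
  obtain ⟨x, hx, hmax, hub⟩ := hA.exists_sSup_image_eq_and_ge hA0 (dotL n w).continuous.continuousOn
  have h1 : hsup n w A = dotL n w x := hmax
  have h2 : hsup n w (c • A) = c * dotL n w x := by
    apply IsGreatest.csSup_eq
    constructor
    · exact ⟨c • x, Set.smul_mem_smul_set hx, by simp⟩
    · rintro z ⟨y, ⟨a, ha, rfl⟩, rfl⟩
      simp only [map_smul, smul_eq_mul]
      exact mul_le_mul_of_nonneg_left (hub a ha) hc
  rw [h1, h2]

lemma sum_set_props {n : ℕ} {ι : Type*} (s : Finset ι) (A : ι → Set (Fin n → ℝ))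
    (h : ∀ i ∈ s, IsCompact (A i) ∧ (A i).Nonempty ∧ Convex ℝ (A i)) :
    IsCompact (∑ i ∈ s, A i) ∧ (∑ i ∈ s, A i).Nonempty ∧ Convex ℝ (∑ i ∈ s, A i) := by
  induction s using Finset.cons_induction with
  | empty =>
    rw [Finset.sum_empty]
    exact ⟨isCompact_singleton, ⟨0, rfl⟩, convex_singleton 0⟩
  | cons a s ha ih =>
    have hs := ih (fun i hi => h i (Finset.mem_cons_of_mem hi))
    have hha := h a (Finset.mem_cons_self a s)
    rw [Finset.sum_cons]
    exact ⟨hha.1.add hs.1, hha.2.1.add hs.2.1, hha.2.2.add hs.2.2⟩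

lemma hsup_sum {n : ℕ} {ι : Type*} (w : Fin n → ℝ) (s : Finset ι) (A : ι → Set (Fin n → ℝ))
    (h : ∀ i ∈ s, IsCompact (A i) ∧ (A i).Nonempty ∧ Convex ℝ (A i)) :
    hsup n w (∑ i ∈ s, A i) = ∑ i ∈ s, hsup n w (A i) := by
  induction s using Finset.cons_induction with
  | empty =>
    rw [Finset.sum_empty, Finset.sum_empty]
    exact hsup_singleton_zero w
  | cons a s ha ih =>
    have hs := sum_set_props s A (fun i hi => h i (Finset.mem_cons_of_mem hi))
    have hha := h a (Finset.mem_cons_self a s)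
    rw [Finset.sum_cons, Finset.sum_cons, hsup_add w hha.1 hha.2.1 hs.1 hs.2.1,
      ih (fun i hi => h i (Finset.mem_cons_of_mem hi))]

lemma hsup_convexHull {n : ℕ} (w : Fin n → ℝ) {S : Set (Fin n → ℝ)}
    (hS0 : S.Nonempty) (hbdd : BddAbove (dotL n w '' S)) :
    hsup n w (convexHull ℝ S) = hsup n w S := by
  have hb : ∀ z ∈ dotL n w '' (convexHull ℝ S), z ≤ sSup (dotL n w '' S) := by
    rintro z ⟨x, hx, rfl⟩
    have hsub : convexHull ℝ S ⊆ {y | dotL n w y ≤ sSup (dotL n w '' S)} := by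
      apply convexHull_min
      · intro y hy
        exact le_csSup hbdd ⟨y, hy, rfl⟩
      · exact convex_halfSpace_le ((dotL n w).toLinearMap.isLinear) _
    exact hsub hx
  apply le_antisymm
  · exact csSup_le ((hS0.mono (subset_convexHull ℝ S)).image _) hb
  · exact csSup_le_csSup ⟨_, fun z hz => hb z hz⟩ (hS0.image _)
      (Set.image_mono (subset_convexHull ℝ S))

lemma eq_of_hsup_eq {n : ℕ} {K L : Set (Fin n → ℝ)}
    (hK : IsCompact K) (hKc : Convex ℝ K) (hK0 : K.Nonempty)
    (hL : IsCompact L) (hLc : Convex ℝ L) (hL0 : L.Nonempty)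
    (h : ∀ w, hsup n w K = hsup n w L) : K = L := by
  have key : ∀ (K L : Set (Fin n → ℝ)), IsCompact K → IsCompact L → Convex ℝ L → L.Nonempty →
      (∀ w, hsup n w K = hsup n w L) → K ⊆ L := by
    intro K L hK hL hLc hL0 h x hx
    by_contra hxL
    obtain ⟨f, t, hfL, hft⟩ := geometric_hahn_banach_closed_point hLc hL.isClosed hxL
    set w : Fin n → ℝ := fun i => f (Pi.single i 1) with hw
    have hfw : ∀ y, f y = dotL n w y := by
      intro y
      conv_lhs => rw [pi_eq_sum_univ y]
      rw [map_sum, dotL_apply]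
      refine Finset.sum_congr rfl fun i _ => ?_
      rw [map_smul, smul_eq_mul, mul_comm]
      congr 2
      funext j
      simp [Pi.single_apply, eq_comm]
    have h1 : dotL n w x ≤ hsup n w K :=
      le_csSup ((hK.image (dotL n w).continuous).bddAbove) ⟨x, hx, rfl⟩
    have h2 : hsup n w L ≤ t :=
      csSup_le (hL0.image _) (by rintro z ⟨a, ha, rfl⟩; exact (hfw a ▸ (hfL a ha)).le)
    rw [hfw x] at hft
    rw [h w] at h1
    linarith
  exact Set.Subset.antisymm (key K L hK hL hLc hL0 h)
    (key L K hL hK hKc hK0 (fun w => (h w).symm))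




variable {E : Type*} [AddCommGroup E] [Module ℝ E] [TopologicalSpace E]
  [IsTopologicalAddGroup E] [ContinuousSMul ℝ E]

lemma isCompact_convexJoin {s t : Set E} (hs : IsCompact s) (ht : IsCompact t) :
    IsCompact (convexJoin ℝ s t) := by
  have himg : convexJoin ℝ s t =
      (fun p : ℝ × (E × E) => (1 - p.1) • p.2.1 + p.1 • p.2.2) ''
        ((Set.Icc (0:ℝ) 1) ×ˢ (s ×ˢ t)) := by
    ext z
    simp only [convexJoin, Set.mem_iUnion, Set.mem_image, Set.mem_prod, segment_eq_image]
    constructor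
    · rintro ⟨x, hx, y, hy, θ, hθ, rfl⟩
      exact ⟨(θ, x, y), ⟨hθ, hx, hy⟩, rfl⟩
    · rintro ⟨⟨θ, x, y⟩, ⟨hθ, hx, hy⟩, rfl⟩
      exact ⟨x, hx, y, hy, θ, hθ, rfl⟩
  rw [himg]
  exact ((isCompact_Icc).prod (hs.prod ht)).image
    (((continuous_const.sub continuous_fst).smul (continuous_snd.fst)).add
      (continuous_fst.smul continuous_snd.snd))

lemma isCompact_convexHull_biUnion {ι : Type*} (s : Finset ι) (B : ι → Set E)
    (hcomp : ∀ i, IsCompact (B i)) (hconv : ∀ i, Convex ℝ (B i)) (hne : ∀ i, (B i).Nonempty) :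
    IsCompact (convexHull ℝ (⋃ i ∈ (s : Set ι), B i)) := by
  induction s using Finset.cons_induction with
  | empty => simp
  | cons a s ha ih =>
    rw [Finset.coe_cons, Set.biUnion_insert]
    rcases s.eq_empty_or_nonempty with rfl | hs
    · simp only [Finset.coe_empty, Set.mem_empty_iff_false, Set.iUnion_of_empty,
        Set.iUnion_empty, Set.union_empty]
      rw [(hconv a).convexHull_eq]
      exact hcomp a
    · obtain ⟨i0, hi0⟩ := hs
      obtain ⟨x0, hx0⟩ := hne i0
      have hU : (⋃ i ∈ (s : Set ι), B i).Nonempty :=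
        ⟨x0, Set.mem_biUnion hi0 hx0⟩
      rw [convexHull_union (hne a) hU, (hconv a).convexHull_eq]
      exact isCompact_convexJoin (hcomp a) ih




def Pset (n : ℕ) (u : Fin n → ℝ) : Set (Fin n → ℝ) := {a | IsParkingFunction n u a}

def Bset (n : ℕ) (u : Fin n → ℝ) (σ : Equiv.Perm (Fin n)) : Set (Fin n → ℝ) :=
  {a | (∀ i, 0 ≤ a i) ∧ Monotone (fun i => a (σ i)) ∧ ∀ i, a (σ i) ≤ u i}

lemma Pset_eq_biUnion (n : ℕ) (u : Fin n → ℝ) :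
    Pset n u = ⋃ σ ∈ ((Finset.univ : Finset (Equiv.Perm (Fin n))) : Set (Equiv.Perm (Fin n))),
      Bset n u σ := by
  ext a
  simp only [Pset, Set.mem_setOf_eq, Set.mem_iUnion, IsParkingFunction, Bset,
    Finset.coe_univ, Set.mem_univ, exists_true_left]
  constructor
  · rintro ⟨h0, σ, h1, h2⟩; exact ⟨σ, h0, h1, h2⟩
  · rintro ⟨σ, h0, h1, h2⟩; exact ⟨h0, σ, h1, h2⟩

lemma Bset_convex (n : ℕ) (u : Fin n → ℝ) (σ : Equiv.Perm (Fin n)) :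
    Convex ℝ (Bset n u σ) := by
  rintro a ha b hb s t hs ht hst
  refine ⟨fun i => ?_, fun i j hij => ?_, fun i => ?_⟩
  · have := ha.1 i; have := hb.1 i
    simp only [Pi.add_apply, Pi.smul_apply, smul_eq_mul]
    nlinarith
  · have h1 := ha.2.1 hij; have h2 := hb.2.1 hij
    simp only [Pi.add_apply, Pi.smul_apply, smul_eq_mul] at *
    nlinarith
  · have h1 := ha.2.2 i; have h2 := hb.2.2 i
    simp only [Pi.add_apply, Pi.smul_apply, smul_eq_mul]
    calc s * a (σ i) + t * b (σ i) ≤ s * u i + t * u i :=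
          add_le_add (mul_le_mul_of_nonneg_left h1 hs) (mul_le_mul_of_nonneg_left h2 ht)
      _ = u i := by rw [← add_mul, hst, one_mul]

lemma Bset_isClosed (n : ℕ) (u : Fin n → ℝ) (σ : Equiv.Perm (Fin n)) :
    IsClosed (Bset n u σ) := by
  have : Bset n u σ = (⋂ i, {a : Fin n → ℝ | 0 ≤ a i}) ∩
      ((⋂ (p : Fin n × Fin n), ⋂ (_ : p.1 ≤ p.2), {a : Fin n → ℝ | a (σ p.1) ≤ a (σ p.2)}) ∩
        (⋂ i, {a : Fin n → ℝ | a (σ i) ≤ u i})) := by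
    ext a
    simp only [Bset, Set.mem_setOf_eq, Set.mem_inter_iff, Set.mem_iInter]
    constructor
    · rintro ⟨h0, h1, h2⟩
      exact ⟨h0, fun p hp => h1 hp, h2⟩
    · rintro ⟨h0, h1, h2⟩
      exact ⟨h0, fun i j hij => h1 (i, j) hij, h2⟩
  rw [this]
  refine IsClosed.inter (isClosed_iInter fun i => isClosed_le continuous_const (continuous_apply i))
    (IsClosed.inter (isClosed_iInter fun p => isClosed_iInter fun _ =>
        isClosed_le (continuous_apply _) (continuous_apply _))
      (isClosed_iInter fun i => isClosed_le (continuous_apply _) continuous_const))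

lemma Bset_isCompact (n : ℕ) (hn : 1 ≤ n) (u : Fin n → ℝ) (hmono : Monotone u)
    (σ : Equiv.Perm (Fin n)) : IsCompact (Bset n u σ) := by
  have hlt : n - 1 < n := by omega
  apply IsCompact.of_isClosed_subset (isCompact_Icc (a := (0 : Fin n → ℝ))
    (b := fun _ => u ⟨n - 1, hlt⟩)) (Bset_isClosed n u σ)
  rintro a ⟨h0, _, h2⟩
  constructor
  · intro i; exact h0 i
  · intro i
    have : a i = a (σ (σ.symm i)) := by rw [Equiv.apply_symm_apply]
    rw [this]
    refine le_trans (h2 (σ.symm i)) (hmono ?_)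
    have := (σ.symm i).isLt
    exact Fin.le_def.mpr (by simp only []; omega)

lemma Bset_nonempty (n : ℕ) (u : Fin n → ℝ) (hnonneg : ∀ i, 0 ≤ u i) (σ : Equiv.Perm (Fin n)) :
    (Bset n u σ).Nonempty :=
  ⟨0, fun _ => le_refl 0, monotone_const, fun i => hnonneg i⟩


lemma hsup_Pset (n : ℕ) (u : Fin n → ℝ) (hmono : Monotone u) (hnonneg : ∀ i, 0 ≤ u i)
    (w : Fin n → ℝ) :
    hsup n w (Pset n u) = ∑ j, max (w (Tuple.sort w j)) 0 * u j := by
  set τ := Tuple.sort w with hτ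
  have hv : Monotone (fun j => w (τ j)) := Tuple.monotone_sort w
  apply IsGreatest.csSup_eq
  constructor
  · -- the maximum is attained
    set b : Fin n → ℝ := fun j => if 0 < w (τ j) then u j else 0 with hb
    have hmemb : (fun i => b (τ.symm i)) ∈ Pset n u := by
      refine ⟨fun i => ?_, τ, ?_, ?_⟩
      · simp only [hb]
        split_ifs with h
        · exact hnonneg _
        · exact le_refl 0
      · intro i j hij
        simp only [Equiv.symm_apply_apply, hb]
        split_ifs with h1 h2
        · exact hmono hij
        · exact absurd (lt_of_lt_of_le h1 (hv hij)) h2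
        · exact hnonneg _
        · exact le_refl 0
      · intro i
        simp only [Equiv.symm_apply_apply, hb]
        split_ifs with h
        · exact le_refl _
        · exact hnonneg _
    refine ⟨_, hmemb, ?_⟩
    rw [dotL_apply]
    rw [← Equiv.sum_comp τ (fun i => w i * b (τ.symm i))]
    refine Finset.sum_congr rfl fun j _ => ?_
    simp only [Equiv.symm_apply_apply, hb]
    split_ifs with h
    · rw [max_eq_left h.le]
    · rw [max_eq_right (not_lt.mp h), zero_mul, mul_zero]
  · -- it is an upper bound
    rintro z ⟨a, ⟨ha0, σ, hmon, hle⟩, rfl⟩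
    rw [dotL_apply]
    rw [← Equiv.sum_comp σ (fun i => w i * a i)]
    have step1 : ∑ j, w (σ j) * a (σ j) ≤ ∑ j, max (w (σ j)) 0 * a (σ j) :=
      Finset.sum_le_sum fun j _ =>
        mul_le_mul_of_nonneg_right (le_max_left _ _) (ha0 _)
    have hfmono : Monotone (fun j => max (w (τ j)) 0) :=
      fun i j hij => max_le_max (hv hij) le_rfl
    have hmv : Monovary (fun j => max (w (τ j)) 0) (fun j => a (σ j)) := by
      intro i j hg
      have hij : i ≤ j := by
        by_contra hcon
        exact absurd (hmon (le_of_not_ge hcon)) (not_le.mpr hg)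
      exact hfmono hij
    have step2 : ∑ j, max (w (σ j)) 0 * a (σ j) ≤ ∑ j, max (w (τ j)) 0 * a (σ j) := by
      have := hmv.sum_comp_perm_smul_le_sum_smul (σ := σ.trans τ.symm)
      simpa only [Equiv.trans_apply, Equiv.apply_symm_apply, smul_eq_mul] using this
    have step3 : ∑ j, max (w (τ j)) 0 * a (σ j) ≤ ∑ j, max (w (τ j)) 0 * u j :=
      Finset.sum_le_sum fun j _ =>
        mul_le_mul_of_nonneg_left (hle j) (le_max_right _ _)
    calc ∑ j, w (σ j) * a (σ j) ≤ _ := step1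
      _ ≤ _ := step2
      _ ≤ _ := step3


lemma simplex0_base_eq (n : ℕ) (I : Finset (Fin n)) :
    (insert (0 : Fin n → ℝ) {x | ∃ i ∈ I, x = Pi.single i (1 : ℝ)}) =
      insert (0 : Fin n → ℝ) ((fun i => Pi.single i (1:ℝ)) '' (I : Set (Fin n))) := by
  congr 1
  ext x
  simp [eq_comm]

lemma simplex0_isCompact (n : ℕ) (I : Finset (Fin n)) : IsCompact (simplex0 n I) := by
  rw [simplex0, simplex0_base_eq]
  exact Set.Finite.isCompact_convexHull ℝ
    ((Set.Finite.image _ I.finite_toSet).insert 0)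

lemma simplex0_convex (n : ℕ) (I : Finset (Fin n)) : Convex ℝ (simplex0 n I) :=
  convex_convexHull ℝ _

lemma simplex0_nonempty (n : ℕ) (I : Finset (Fin n)) : (simplex0 n I).Nonempty :=
  ⟨0, subset_convexHull ℝ _ (Set.mem_insert _ _)⟩

lemma dotL_single (n : ℕ) (w : Fin n → ℝ) (i : Fin n) :
    dotL n w (Pi.single i (1:ℝ)) = w i := by
  rw [dotL_apply]
  rw [Finset.sum_eq_single i]
  · simp
  · intro j _ hji
    simp [Pi.single_apply, hji]
  · intro h; exact absurd (Finset.mem_univ i) h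

lemma hsup_simplex0 (n : ℕ) (w : Fin n → ℝ) (I : Finset (Fin n)) (hI : I.Nonempty) :
    hsup n w (simplex0 n I) = max (I.sup' hI w) 0 := by
  rw [simplex0, hsup_convexHull w ⟨0, Set.mem_insert _ _⟩]
  · apply IsGreatest.csSup_eq
    constructor
    · obtain ⟨i0, hi0, hsup'⟩ := Finset.exists_mem_eq_sup' hI w
      rcases le_total (I.sup' hI w) 0 with h | h
      · refine ⟨0, Set.mem_insert _ _, ?_⟩
        rw [map_zero, max_eq_right h]
      · refine ⟨Pi.single i0 (1:ℝ), Set.mem_insert_of_mem _ ⟨i0, hi0, rfl⟩, ?_⟩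
        rw [dotL_single, max_eq_left h, hsup']
    · rintro z ⟨x, hx, rfl⟩
      rcases hx with rfl | ⟨i, hi, rfl⟩
      · rw [map_zero]; exact le_max_right _ _
      · rw [dotL_single]
        exact le_trans (Finset.le_sup' w hi) (le_max_left _ _)
  · rw [simplex0_base_eq]
    exact (((Set.Finite.image _ I.finite_toSet).insert 0).image _).bddAbove

lemma alt_sum_real (d : ℕ) :
    (∑ r ∈ Finset.range (d+1), (-1:ℝ)^r * (d.choose r : ℝ)) = if d = 0 then (1:ℝ) else 0 := by
  rcases eq_or_ne d 0 with h | h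
  · subst h; simp
  · rw [if_neg h]
    exact_mod_cast Int.alternating_sum_range_choose_of_ne h

lemma binom_inv (f : ℕ → ℝ) (m : ℕ) :
    ∑ k ∈ Finset.range (m+1), (m.choose k : ℝ) *
      (∑ j ∈ Finset.range (k+1), (k.choose j : ℝ) * (-1)^j * f (k - j)) = f m := by
  have reflect : ∀ k, (∑ j ∈ Finset.range (k+1), (k.choose j : ℝ) * (-1)^j * f (k - j))
      = ∑ l ∈ Finset.range (k+1), (k.choose l : ℝ) * (-1)^(k-l) * f l := by
    intro k
    rw [← Finset.sum_range_reflect (fun l => (k.choose l : ℝ) * (-1)^(k-l) * f l) (k+1)]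
    refine Finset.sum_congr rfl fun j hj => ?_
    have hj' : j ≤ k := Nat.lt_succ_iff.mp (Finset.mem_range.mp hj)
    simp only [Nat.add_sub_cancel]
    rw [Nat.choose_symm hj', Nat.sub_sub_self hj']
  simp only [reflect]
  have extend : ∀ k ∈ Finset.range (m+1),
      (m.choose k : ℝ) * (∑ l ∈ Finset.range (k+1), (k.choose l : ℝ) * (-1)^(k-l) * f l)
      = ∑ l ∈ Finset.range (m+1),
          (if l ≤ k then (m.choose k : ℝ) * ((k.choose l : ℝ) * (-1)^(k-l) * f l) else 0) := by
    intro k hk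
    rw [Finset.mul_sum]
    rw [← Finset.sum_filter]
    apply Finset.sum_congr
    · ext l
      simp only [Finset.mem_filter, Finset.mem_range]
      have := Finset.mem_range.mp hk
      omega
    · intro l _; rfl
  rw [Finset.sum_congr rfl extend, Finset.sum_comm]
  have inner : ∀ l ∈ Finset.range (m+1),
      (∑ k ∈ Finset.range (m+1),
        (if l ≤ k then (m.choose k : ℝ) * ((k.choose l : ℝ) * (-1)^(k-l) * f l) else 0))
      = (if l = m then (1:ℝ) else 0) * f l := by
    intro l hl
    have hlm : l ≤ m := Nat.lt_succ_iff.mp (Finset.mem_range.mp hl)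
    rw [← Finset.sum_filter]
    have hfilter : (Finset.range (m+1)).filter (fun k => l ≤ k) = Finset.Ico l (m+1) := by
      ext k
      simp only [Finset.mem_filter, Finset.mem_range, Finset.mem_Ico]
      omega
    rw [hfilter, Finset.sum_Ico_eq_sum_range]
    have hterm : ∀ r ∈ Finset.range (m + 1 - l),
        (m.choose (l+r) : ℝ) * (((l+r).choose l : ℝ) * (-1)^(l+r-l) * f l)
        = (m.choose l : ℝ) * f l * ((-1:ℝ)^r * ((m-l).choose r : ℝ)) := by
      intro r hr
      have hr' : l + r ≤ m := by
        have := Finset.mem_range.mp hr; omega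
      have hch : (m.choose (l+r)) * ((l+r).choose l) = m.choose l * (m-l).choose r := by
        have := Nat.choose_mul (n := m) (k := l + r) (s := l) (Nat.le_add_right l r)
        simpa [Nat.add_sub_cancel_left] using this
      have : ((m.choose (l+r)) : ℝ) * (((l+r).choose l) : ℝ)
          = ((m.choose l) : ℝ) * (((m-l).choose r) : ℝ) := by exact_mod_cast hch
      rw [Nat.add_sub_cancel_left]
      linear_combination ((-1:ℝ)^r * f l) * this
    rw [Finset.sum_congr rfl hterm, ← Finset.mul_sum]
    have : m + 1 - l = (m - l) + 1 := by omega
    rw [this, alt_sum_real]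
    rcases eq_or_ne l m with h | h
    · subst h; simp
    · rw [if_neg (by omega : ¬ m - l = 0), if_neg h]; ring
  rw [Finset.sum_congr rfl inner]
  simp only [ite_mul, one_mul, zero_mul]
  rw [Finset.sum_ite_eq' (Finset.range (m+1)) m f]
  simp



def gval (n : ℕ) (I : Finset (Fin n)) (w : Fin n → ℝ) : ℝ :=
  if hI : I.Nonempty then max (I.sup' hI w) 0 else 0

lemma inv_u (n : ℕ) (u : Fin n → ℝ) (m : ℕ) :
    ∑ k ∈ Finset.range (m+1), (m.choose k : ℝ) * ysub n u (k+1) = Uext n u m := by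
  have : ∀ k, ysub n u (k+1)
      = ∑ j ∈ Finset.range (k+1), (k.choose j : ℝ) * (-1)^j * Uext n u (k - j) := by
    intro k; unfold ysub; simp only [Nat.add_sub_cancel]
  simp only [this]
  exact binom_inv (Uext n u) m

lemma comb (n : ℕ) (hn : 1 ≤ n) (u w : Fin n → ℝ) :
    ∑ I ∈ Finset.univ.filter (fun I : Finset (Fin n) => I.Nonempty),
      ysub n u I.card * gval n I w
    = ∑ j, max (w (Tuple.sort w j)) 0 * u j := by
  set τ := Tuple.sort w with hτdef
  have hv : Monotone (fun j => w (τ j)) := Tuple.monotone_sort w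
  -- Step 1: reindex subsets by τ
  have step1 : ∑ I ∈ Finset.univ.filter (fun I : Finset (Fin n) => I.Nonempty),
      ysub n u I.card * gval n I w
      = ∑ J ∈ Finset.univ.filter (fun J : Finset (Fin n) => J.Nonempty),
        ysub n u J.card * (if hJ : J.Nonempty then max (w (τ (J.max' hJ))) 0 else 0) := by
    apply Finset.sum_nbij' (i := fun I => I.map τ.symm.toEmbedding)
      (j := fun J => J.map τ.toEmbedding)
    · intro I hI
      simp only [Finset.mem_filter, Finset.mem_univ, true_and] at hI ⊢
      exact hI.map
    · intro J hJ
      simp only [Finset.mem_filter, Finset.mem_univ, true_and] at hJ ⊢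
      exact hJ.map
    · intro I _
      ext x
      simp [Finset.mem_map_equiv]
    · intro J _
      ext x
      simp [Finset.mem_map_equiv]
    · intro I hImem
      simp only [Finset.mem_filter, Finset.mem_univ, true_and] at hImem
      have hJne : (I.map τ.symm.toEmbedding).Nonempty := hImem.map
      rw [Finset.card_map, gval, dif_pos hImem, dif_pos hJne]
      congr 1
      congr 1
      set m := (I.map τ.symm.toEmbedding).max' hJne with hm
      have hmmem : τ m ∈ I := by
        have := (I.map τ.symm.toEmbedding).max'_mem hJne
        rw [← hm] at this
        rwa [Finset.mem_map_equiv, Equiv.symm_symm] at this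
      apply le_antisymm
      · apply Finset.sup'_le
        intro i hi
        have hiJ : τ.symm i ∈ I.map τ.symm.toEmbedding := by
          rw [Finset.mem_map_equiv, Equiv.symm_symm, Equiv.apply_symm_apply]
          exact hi
        have : τ.symm i ≤ m := Finset.le_max' _ _ hiJ
        have := hv this
        simpa using this
      · exact Finset.le_sup' w hmmem
  rw [step1]
  -- Step 2: partition by the maximum
  have step2 : ∑ J ∈ Finset.univ.filter (fun J : Finset (Fin n) => J.Nonempty),
      ysub n u J.card * (if hJ : J.Nonempty then max (w (τ (J.max' hJ))) 0 else 0)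
      = ∑ x ∈ (Finset.univ : Finset (Fin n)).sigma (fun m => (Finset.Iio m).powerset),
          ysub n u (x.2.card + 1) * max (w (τ x.1)) 0 := by
    symm
    apply Finset.sum_nbij' (i := fun x : (_ : Fin n) × Finset (Fin n) => insert x.1 x.2)
      (j := fun J => if hJ : J.Nonempty
        then (⟨J.max' hJ, J.erase (J.max' hJ)⟩ : (_ : Fin n) × Finset (Fin n))
        else ⟨⟨0, hn⟩, ∅⟩)
    · rintro ⟨m, S⟩ _
      simp only [Finset.mem_filter, Finset.mem_univ, true_and]
      exact Finset.insert_nonempty _ _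
    · intro J hJmem
      simp only [Finset.mem_filter, Finset.mem_univ, true_and] at hJmem
      rw [dif_pos hJmem]
      simp only [Finset.mem_sigma, Finset.mem_univ, true_and, Finset.mem_powerset]
      intro x hx
      rw [Finset.mem_erase] at hx
      exact Finset.mem_Iio.mpr (lt_of_le_of_ne (Finset.le_max' _ _ hx.2) hx.1)
    · rintro ⟨m, S⟩ hx
      simp only [Finset.mem_sigma, Finset.mem_univ, true_and, Finset.mem_powerset] at hx
      have hmS : m ∉ S := fun h => absurd (Finset.mem_Iio.mp (hx h)) (lt_irrefl m)
      have hne' : (insert m S).Nonempty := Finset.insert_nonempty _ _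
      rw [dif_pos hne']
      have h1 : (insert m S).max' hne' = m := by
        apply le_antisymm
        · apply Finset.max'_le
          intro y hy
          rcases Finset.mem_insert.mp hy with rfl | hyS
          · exact le_refl _
          · exact (Finset.mem_Iio.mp (hx hyS)).le
        · exact Finset.le_max' _ _ (Finset.mem_insert_self _ _)
      simp only [h1, Finset.erase_insert hmS]
    · intro J hJmem
      simp only [Finset.mem_filter, Finset.mem_univ, true_and] at hJmem
      rw [dif_pos hJmem]
      exact Finset.insert_erase (J.max'_mem hJmem)
    · rintro ⟨m, S⟩ hx
      simp only [Finset.mem_sigma, Finset.mem_univ, true_and, Finset.mem_powerset] at hx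
      have hmS : m ∉ S := fun h => absurd (Finset.mem_Iio.mp (hx h)) (lt_irrefl m)
      have hne' : (insert m S).Nonempty := Finset.insert_nonempty _ _
      dsimp only
      have h1 : (insert m S).max' hne' = m := by
        apply le_antisymm
        · apply Finset.max'_le
          intro y hy
          rcases Finset.mem_insert.mp hy with rfl | hyS
          · exact le_refl _
          · exact (Finset.mem_Iio.mp (hx hyS)).le
        · exact Finset.le_max' _ _ (Finset.mem_insert_self _ _)
      rw [dif_pos hne', Finset.card_insert_of_notMem hmS, h1]
  rw [step2, Finset.sum_sigma]
  -- Step 3: evaluate the inner sums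
  refine Finset.sum_congr rfl fun m _ => ?_
  dsimp only
  rw [← Finset.sum_mul]
  have hps : ∑ S ∈ (Finset.Iio m).powerset, ysub n u (S.card + 1)
      = ∑ k ∈ Finset.range ((m : ℕ) + 1), ((m : ℕ).choose k : ℝ) * ysub n u (k+1) := by
    rw [Finset.sum_powerset_apply_card (fun c => ysub n u (c+1))]
    rw [Fin.card_Iio]
    refine Finset.sum_congr rfl fun k _ => ?_
    rw [nsmul_eq_mul]
  rw [hps, inv_u]
  have : Uext n u (m : ℕ) = u m := by
    rw [Uext, dif_pos m.isLt]
  rw [this, mul_comm]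

lemma isCompact_smul_set' {n : ℕ} (c : ℝ) {A : Set (Fin n → ℝ)} (hA : IsCompact A) :
    IsCompact (c • A) := by
  rw [← Set.image_smul]
  exact hA.image (continuous_id.const_smul c)

theorem parking_polytope_signed_minkowski_sum'
    (n : ℕ) (hn : 1 ≤ n) (u : Fin n → ℝ)
    (hmono : Monotone u) (hnonneg : ∀ i, 0 ≤ u i) (hne : u ≠ 0) :
    (convexHull ℝ (Pset n u)) +
      ∑ I ∈ Finset.univ.filter
          (fun I : Finset (Fin n) => I.Nonempty ∧ ysub n u I.card < 0),
        (-(ysub n u I.card)) • simplex0 n I =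
    ∑ I ∈ Finset.univ.filter
        (fun I : Finset (Fin n) => I.Nonempty ∧ 0 ≤ ysub n u I.card),
      ysub n u I.card • simplex0 n I := by
  classical
  have hP0 : (0 : Fin n → ℝ) ∈ Pset n u :=
    ⟨fun i => le_refl _, 1, monotone_const, fun i => hnonneg i⟩
  have hPF_compact : IsCompact (convexHull ℝ (Pset n u)) := by
    rw [Pset_eq_biUnion n u]
    exact isCompact_convexHull_biUnion _ _ (Bset_isCompact n hn u hmono) (Bset_convex n u)
      (Bset_nonempty n u hnonneg)
  have hPF_convex : Convex ℝ (convexHull ℝ (Pset n u)) := convex_convexHull ℝ _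
  have hPF_ne : (convexHull ℝ (Pset n u)).Nonempty := ⟨0, subset_convexHull ℝ _ hP0⟩
  set Neg := Finset.univ.filter
    (fun I : Finset (Fin n) => I.Nonempty ∧ ysub n u I.card < 0) with hNeg
  set Pos := Finset.univ.filter
    (fun I : Finset (Fin n) => I.Nonempty ∧ 0 ≤ ysub n u I.card) with hPos
  have hNegprops : ∀ I ∈ Neg, IsCompact ((-(ysub n u I.card)) • simplex0 n I) ∧
      ((-(ysub n u I.card)) • simplex0 n I).Nonempty ∧
      Convex ℝ ((-(ysub n u I.card)) • simplex0 n I) := fun I _ =>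
    ⟨isCompact_smul_set' _ (simplex0_isCompact n I),
      (simplex0_nonempty n I).smul_set, (simplex0_convex n I).smul _⟩
  have hPosprops : ∀ I ∈ Pos, IsCompact ((ysub n u I.card) • simplex0 n I) ∧
      ((ysub n u I.card) • simplex0 n I).Nonempty ∧
      Convex ℝ ((ysub n u I.card) • simplex0 n I) := fun I _ =>
    ⟨isCompact_smul_set' _ (simplex0_isCompact n I),
      (simplex0_nonempty n I).smul_set, (simplex0_convex n I).smul _⟩
  obtain ⟨hNsum_comp, hNsum_ne, hNsum_conv⟩ := sum_set_props Neg _ hNegprops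
  obtain ⟨hPsum_comp, hPsum_ne, hPsum_conv⟩ := sum_set_props Pos _ hPosprops
  apply eq_of_hsup_eq (hPF_compact.add hNsum_comp) (hPF_convex.add hNsum_conv)
    (hPF_ne.add hNsum_ne) hPsum_comp hPsum_conv hPsum_ne
  intro w
  -- compute both sides
  rw [hsup_add w hPF_compact hPF_ne hNsum_comp hNsum_ne]
  rw [hsup_sum w Neg _ hNegprops, hsup_sum w Pos _ hPosprops]
  have hPsetbdd : BddAbove (dotL n w '' Pset n u) :=
    ((hPF_compact.image (dotL n w).continuous).bddAbove).mono
      (Set.image_mono (subset_convexHull ℝ _))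
  rw [hsup_convexHull w ⟨0, hP0⟩ hPsetbdd, hsup_Pset n u hmono hnonneg w]
  have hsmulNeg : ∀ I ∈ Neg, hsup n w ((-(ysub n u I.card)) • simplex0 n I)
      = (-(ysub n u I.card)) * gval n I w := by
    intro I hI
    rw [hNeg, Finset.mem_filter] at hI
    obtain ⟨_, hIne, hIneg⟩ := hI
    rw [hsup_smul w (by linarith) (simplex0_isCompact n I) (simplex0_nonempty n I),
      hsup_simplex0 n w I hIne, gval, dif_pos hIne]
  have hsmulPos : ∀ I ∈ Pos, hsup n w ((ysub n u I.card) • simplex0 n I)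
      = (ysub n u I.card) * gval n I w := by
    intro I hI
    rw [hPos, Finset.mem_filter] at hI
    obtain ⟨_, hIne, hIpos⟩ := hI
    rw [hsup_smul w hIpos (simplex0_isCompact n I) (simplex0_nonempty n I),
      hsup_simplex0 n w I hIne, gval, dif_pos hIne]
  rw [Finset.sum_congr rfl hsmulNeg, Finset.sum_congr rfl hsmulPos]
  -- the scalar identity
  have hcomb := comb n hn u w
  have hsplit : ∑ I ∈ Finset.univ.filter (fun I : Finset (Fin n) => I.Nonempty),
      ysub n u I.card * gval n I w
      = (∑ I ∈ Pos, ysub n u I.card * gval n I w)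
        + ∑ I ∈ Neg, ysub n u I.card * gval n I w := by
    rw [hPos, hNeg]
    rw [← Finset.sum_filter_add_sum_filter_not
      (Finset.univ.filter (fun I : Finset (Fin n) => I.Nonempty))
      (fun I => 0 ≤ ysub n u I.card)]
    congr 1
    · rw [Finset.filter_filter]
    · rw [Finset.filter_filter]
      apply Finset.sum_congr _ (fun _ _ => rfl)
      apply Finset.filter_congr
      intro I _
      simp [not_le]
  rw [hcomb] at hsplit
  simp only [neg_mul]
  rw [Finset.sum_neg_distrib]
  linarith


/-- The parking function polytope is the signed Minkowski sum
`∑_{∅ ≠ I ⊆ [n]} y_I Δ_I⁰`; precisely,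
`PF(u) + ∑_{y_I < 0} (-y_I) Δ_I⁰ = ∑_{y_I ≥ 0} y_I Δ_I⁰`. -/
theorem parking_polytope_signed_minkowski_sum
    (n : ℕ) (hn : 1 ≤ n) (u : Fin n → ℝ)
    (hmono : Monotone u) (hnonneg : ∀ i, 0 ≤ u i) (hne : u ≠ 0) :
    PF n u +
      ∑ I ∈ Finset.univ.filter
          (fun I : Finset (Fin n) => I.Nonempty ∧ ysub n u I.card < 0),
        (-(ysub n u I.card)) • simplex0 n I =
    ∑ I ∈ Finset.univ.filter
        (fun I : Finset (Fin n) => I.Nonempty ∧ 0 ≤ ysub n u I.card),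
      ysub n u I.card • simplex0 n I := by
  exact parking_polytope_signed_minkowski_sum' n hn u hmono hnonneg hne
end
end

section
/- Let B be a skewed binary partition of {0,…,n} with type (b_{−1}, b_0, b_1, …, b_k). Then the dimension of the sliced preorder cone σ̃(B) (that is, the dimension of the linear span of σ̃(B), which contains 0) equals the sum of all entries b_i that are plain (unstarred, uncircled) positive integers, plus the number of starred entries; and consequently the codimension of σ̃(B) in ℝ^n equals |b_0| + Σ_{i : b_i starred} (|b_i| − 1). -/
noncomputable section

/-- A skewed binary partition of `{0, 1, …, n}` with `k + 2` blocks
`B₋₁, B₀, B₁, …, B_k` (indexed here by `Fin (k+2)` with index `0 ↦ B₋₁`,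
`1 ↦ B₀`, `i+2 ↦ B_i`), each declared homogeneous (`hom = true`) or
non-homogeneous. -/
structure SkewedBinaryPartition (n k : ℕ) where
  block : Fin (k + 2) → Finset (Fin (n + 1))
  hom : Fin (k + 2) → Bool
  disj : ∀ i j, i ≠ j → Disjoint (block i) (block j)
  cover : ∀ x : Fin (n + 1), ∃ i, x ∈ block i
  homNeg : hom 0 = false
  homZero : 2 ≤ (block 1).card → hom 1 = true
  zeroMem : ((0 : Fin (n + 1)) ∈ block 1) ∨
    ((0 : Fin (n + 1)) ∈ block 0 ∧ 2 ≤ (block 0).card ∧ block 1 = ∅)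
  singletonNonhom : ∀ i : Fin (k + 2), 1 ≤ (i : ℕ) → (block i).card = 1 → hom i = false
  blocksNonempty : ∀ i : Fin (k + 2), 2 ≤ (i : ℕ) → (block i).Nonempty

/-- Extend `c : Fin n → ℝ` to `{0, 1, …, n}` by the convention `c₀ = 0`. -/
def extz (n : ℕ) (c : Fin n → ℝ) : Fin (n + 1) → ℝ := Fin.cases 0 c

/-- The sliced preorder cone of a skewed binary partition. -/
def sliceConeSBP {n k : ℕ} (P : SkewedBinaryPartition n k) : Set (Fin n → ℝ) :=
  {c | (∀ i j : Fin (k + 2), i < j →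
          ∀ p ∈ P.block i, ∀ q ∈ P.block j, extz n c p ≤ extz n c q) ∧
       ∀ i : Fin (k + 2), P.hom i = true →
          ∀ p ∈ P.block i, ∀ q ∈ P.block i, extz n c p = extz n c q}


namespace SBPaux

variable {n k : ℕ} (P : SkewedBinaryPartition n k)

lemma extz_add (c d : Fin n → ℝ) (x : Fin (n+1)) :
    extz n (c + d) x = extz n c x + extz n d x := by
  induction x using Fin.cases <;> simp [extz]

lemma extz_smul (r : ℝ) (c : Fin n → ℝ) (x : Fin (n+1)) :
    extz n (r • c) x = r * extz n c x := by
  induction x using Fin.cases <;> simp [extz]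

lemma extz_zero (x : Fin (n+1)) : extz n (0 : Fin n → ℝ) x = 0 := by
  induction x using Fin.cases <;> simp [extz]

lemma extz_succ (c : Fin n → ℝ) (y : Fin n) : extz n c y.succ = c y := rfl

lemma extz_zero_pt (c : Fin n → ℝ) : extz n c 0 = 0 := rfl

/-- The block index of a point. -/
def idx (x : Fin (n + 1)) : Fin (k + 2) := (P.cover x).choose

lemma mem_block_idx (x : Fin (n+1)) : x ∈ P.block (idx P x) := (P.cover x).choose_spec

lemma idx_eq {x : Fin (n+1)} {i : Fin (k+2)} (h : x ∈ P.block i) : idx P x = i := by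
  by_contra hne
  exact Finset.disjoint_left.mp (P.disj _ _ hne) (mem_block_idx P x) h

/-- The linear subspace of forced equalities. -/
def L : Submodule ℝ (Fin n → ℝ) where
  carrier := {c | ∀ p q : Fin (n+1), idx P p = idx P q → P.hom (idx P p) = true →
      extz n c p = extz n c q}
  add_mem' := by
    intro a b ha hb p q h1 h2
    rw [extz_add, extz_add, ha p q h1 h2, hb p q h1 h2]
  zero_mem' := by intro p q _ _; rw [extz_zero, extz_zero]
  smul_mem' := by
    intro r a ha p q h1 h2
    rw [extz_smul, extz_smul, ha p q h1 h2]

lemma cone_subset_L : sliceConeSBP P ⊆ (L P : Set (Fin n → ℝ)) := by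
  rintro c ⟨_, h2⟩ p q hpq hhom
  exact h2 _ hhom p (mem_block_idx P p) q (hpq ▸ mem_block_idx P q)

/-- The "staircase" function. -/
def w (t : ℝ) (x : Fin (n+1)) : ℝ := t * (((idx P x : ℕ) : ℝ) - ((idx P 0 : ℕ) : ℝ))

def v (t : ℝ) : Fin n → ℝ := fun y => w P t y.succ

lemma extz_v (t : ℝ) (x : Fin (n+1)) : extz n (v P t) x = w P t x := by
  induction x using Fin.cases with
  | zero => simp [extz, w]
  | succ y => rfl

lemma v_mem_cone {t : ℝ} (ht : 0 ≤ t) : v P t ∈ sliceConeSBP P := by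
  constructor
  · intro i j hij p hp q hq
    rw [extz_v, extz_v, w, w, idx_eq P hp, idx_eq P hq]
    have : ((i : ℕ) : ℝ) ≤ ((j : ℕ) : ℝ) := by exact_mod_cast le_of_lt hij
    nlinarith
  · intro i _ p hp q hq
    rw [extz_v, extz_v, w, w, idx_eq P hp, idx_eq P hq]

lemma L_subset_span : (L P : Set (Fin n → ℝ)) ⊆ Submodule.span ℝ (sliceConeSBP P) := by
  intro c hc
  set t : ℝ := (∑ x : Fin (n+1), |extz n c x|) + (∑ x : Fin (n+1), |extz n c x|) with ht_def
  have habs : ∀ x : Fin (n+1), |extz n c x| ≤ ∑ x : Fin (n+1), |extz n c x| := by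
    intro x
    exact Finset.single_le_sum (fun (y : Fin (n+1)) (_ : y ∈ Finset.univ) => abs_nonneg (extz n c y)) (Finset.mem_univ x)
  have ht : 0 ≤ t := by
    have := Finset.sum_nonneg (fun x (_ : x ∈ Finset.univ) => abs_nonneg (extz n c x))
    simp only [ht_def]; linarith
  have hkey : ∀ p q : Fin (n+1), extz n c p - extz n c q ≤ t := by
    intro p q
    have h1 := habs p
    have h2 := habs q
    have := abs_le.mp (le_refl |extz n c p|)
    have hp := le_abs_self (extz n c p)
    have hq := neg_abs_le (extz n c q)
    simp only [ht_def]; linarith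
  have hmem : (c + v P t) ∈ sliceConeSBP P := by
    constructor
    · intro i j hij p hp q hq
      rw [extz_add, extz_add, extz_v, extz_v, w, w, idx_eq P hp, idx_eq P hq]
      have hij' : ((i : ℕ) : ℝ) + 1 ≤ ((j : ℕ) : ℝ) := by
        have : (i : ℕ) < (j : ℕ) := hij
        exact_mod_cast this
      have := hkey p q
      nlinarith [mul_nonneg ht (by linarith : (0:ℝ) ≤ ((j : ℕ) : ℝ) - ((i : ℕ) : ℝ) - 1)]
    · intro i hi p hp q hq
      rw [extz_add, extz_add, extz_v, extz_v, w, w, idx_eq P hp, idx_eq P hq]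
      have : extz n c p = extz n c q := by
        refine hc p q ?_ ?_
        · rw [idx_eq P hp, idx_eq P hq]
        · rw [idx_eq P hp]; exact hi
      rw [this]
  have h1 : (c + v P t) ∈ Submodule.span ℝ (sliceConeSBP P) := Submodule.subset_span hmem
  have h2 : v P t ∈ Submodule.span ℝ (sliceConeSBP P) :=
    Submodule.subset_span (v_mem_cone P ht)
  have : c = (c + v P t) - v P t := by ring
  rw [this]
  exact Submodule.sub_mem _ h1 h2

lemma span_eq : Submodule.span ℝ (sliceConeSBP P) = L P :=
  le_antisymm (Submodule.span_le.mpr (cone_subset_L P)) (L_subset_span P)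


/-- A representative of each block: `0` for the block containing `0`,
the minimum otherwise. -/
def rep (i : Fin (k+2)) : Fin (n+1) :=
  if (0 : Fin (n+1)) ∈ P.block i then 0
  else if h : (P.block i).Nonempty then (P.block i).min' h else 0

lemma rep_mem {i : Fin (k+2)} (h : (P.block i).Nonempty) : rep P i ∈ P.block i := by
  by_cases h0 : (0 : Fin (n+1)) ∈ P.block i
  · rw [rep, if_pos h0]; exact h0
  · rw [rep, if_neg h0, dif_pos h]; exact (P.block i).min'_mem h

lemma rep_zero {i : Fin (k+2)} (h : (0 : Fin (n+1)) ∈ P.block i) : rep P i = 0 :=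
  if_pos h

/-- The set of free coordinates. -/
def Sset : Finset (Fin (n+1)) :=
  Finset.univ.filter (fun x => x ≠ 0 ∧ (P.hom (idx P x) = true → x = rep P (idx P x)))

lemma mem_Sset {x : Fin (n+1)} :
    x ∈ Sset P ↔ x ≠ 0 ∧ (P.hom (idx P x) = true → x = rep P (idx P x)) := by
  simp [Sset]

lemma zero_not_mem_big {i : Fin (k+2)} (hi : 2 ≤ (i : ℕ)) : (0 : Fin (n+1)) ∉ P.block i := by
  intro h0
  have hidx : idx P (0 : Fin (n+1)) = i := idx_eq P h0
  rcases P.zeroMem with h | ⟨h, _, _⟩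
  · have h1 : i = (1 : Fin (k+2)) := hidx.symm.trans (idx_eq P h)
    rw [h1] at hi
    simp [Fin.val_one] at hi
  · have h1 : i = (0 : Fin (k+2)) := hidx.symm.trans (idx_eq P h)
    rw [h1] at hi
    simp at hi

/-- The restriction linear map. -/
def φ : L P →ₗ[ℝ] (↥(Sset P) → ℝ) where
  toFun c := fun s => extz n c.1 s.1
  map_add' := by intro a b; funext s; exact extz_add _ _ _
  map_smul' := by intro r a; funext s; exact extz_smul _ _ _

lemma φ_inj : Function.Injective (φ P) := by
  rw [injective_iff_map_eq_zero]
  intro c hc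
  have hval : ∀ s : Fin (n+1), s ∈ Sset P → extz n c.1 s = 0 := by
    intro s hs
    have := congrFun hc ⟨s, hs⟩
    simpa [φ] using this
  ext y
  show c.1 y = 0
  rw [← extz_succ c.1 y]
  set x := Fin.succ y with hx
  have hxne : x ≠ 0 := Fin.succ_ne_zero y
  by_cases hh : P.hom (idx P x) = true
  · have hne : (P.block (idx P x)).Nonempty := ⟨x, mem_block_idx P x⟩
    have hrmem := rep_mem P hne
    have hridx : idx P (rep P (idx P x)) = idx P x := idx_eq P hrmem
    have heq : extz n c.1 x = extz n c.1 (rep P (idx P x)) :=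
      c.2 x (rep P (idx P x)) hridx.symm hh
    rw [heq]
    by_cases hr0 : rep P (idx P x) = 0
    · rw [hr0]; rfl
    · apply hval
      rw [mem_Sset]
      refine ⟨hr0, fun _ => ?_⟩
      rw [hridx]
  · apply hval
    rw [mem_Sset]
    exact ⟨hxne, fun h => absurd h hh⟩

def val (g : ↥(Sset P) → ℝ) (z : Fin (n+1)) : ℝ :=
  if h : z ∈ Sset P then g ⟨z, h⟩ else 0

def efun (g : ↥(Sset P) → ℝ) (x : Fin (n+1)) : ℝ :=
  val P g (if P.hom (idx P x) = true then rep P (idx P x) else x)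

def cvec (g : ↥(Sset P) → ℝ) : Fin n → ℝ := fun y => efun P g y.succ

lemma val_zero (g : ↥(Sset P) → ℝ) : val P g 0 = 0 := by
  unfold val
  rw [dif_neg]
  rw [mem_Sset]
  simp

lemma extz_cvec (g : ↥(Sset P) → ℝ) (x : Fin (n+1)) :
    extz n (cvec P g) x = efun P g x := by
  induction x using Fin.cases with
  | zero =>
    show (0:ℝ) = efun P g 0
    unfold efun
    split_ifs with hh
    · rw [rep_zero P (mem_block_idx P 0), val_zero]
    · rw [val_zero]
  | succ y => rfl

lemma cvec_mem_L (g : ↥(Sset P) → ℝ) : cvec P g ∈ L P := by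
  intro p q hpq hh
  rw [extz_cvec, extz_cvec]
  unfold efun
  rw [if_pos hh, if_pos (hpq ▸ hh), hpq]

lemma φ_surj : Function.Surjective (φ P) := by
  intro g
  refine ⟨⟨cvec P g, cvec_mem_L P g⟩, ?_⟩
  funext s
  show extz n (cvec P g) s.1 = g s
  rw [extz_cvec]
  obtain ⟨hne, himp⟩ := (mem_Sset P).mp s.2
  unfold efun
  have hv : val P g s.1 = g s := by
    unfold val
    rw [dif_pos s.2]
  split_ifs with hh
  · rw [← himp hh, hv]
  · exact hv

lemma finrank_L : Module.finrank ℝ ↥(L P) = (Sset P).card := by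
  have e := LinearEquiv.ofBijective (φ P) ⟨φ_inj P, φ_surj P⟩
  rw [e.finrank_eq, Module.finrank_fintype_fun_eq_card, Fintype.card_coe]


lemma Sset_fiber_zero :
    (Sset P).filter (fun x => idx P x = 0) = (P.block 0).erase 0 := by
  ext x
  simp only [Finset.mem_filter, Finset.mem_erase, mem_Sset]
  constructor
  · rintro ⟨⟨hne, -⟩, hidx⟩
    exact ⟨hne, hidx ▸ mem_block_idx P x⟩
  · rintro ⟨hne, hmem⟩
    have hidx := idx_eq P hmem
    refine ⟨⟨hne, fun hh => ?_⟩, hidx⟩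
    rw [hidx, P.homNeg] at hh
    simp at hh

lemma Sset_fiber_one :
    (Sset P).filter (fun x => idx P x = 1) = ∅ := by
  rw [Finset.eq_empty_iff_forall_notMem]
  intro x hx
  obtain ⟨hS, hidx⟩ := Finset.mem_filter.mp hx
  obtain ⟨hne, himp⟩ := (mem_Sset P).mp hS
  have hmem : x ∈ P.block 1 := hidx ▸ mem_block_idx P x
  rcases P.zeroMem with h0 | ⟨-, -, hemp⟩
  · have hcard : 2 ≤ (P.block 1).card :=
      Finset.one_lt_card.mpr ⟨0, h0, x, hmem, fun e => hne e.symm⟩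
    have hhom := P.homZero hcard
    have hx0 : x = rep P (idx P x) := himp (by rw [hidx]; exact hhom)
    rw [hidx, rep_zero P h0] at hx0
    exact hne hx0
  · rw [hemp] at hmem
    simp at hmem

lemma Sset_fiber_big_nonhom {i : Fin (k+2)} (hi : 2 ≤ (i : ℕ)) (hh : P.hom i = false) :
    (Sset P).filter (fun x => idx P x = i) = P.block i := by
  ext x
  simp only [Finset.mem_filter, mem_Sset]
  constructor
  · rintro ⟨-, hidx⟩
    exact hidx ▸ mem_block_idx P x
  · intro hmem
    have hidx := idx_eq P hmem
    refine ⟨⟨fun e => zero_not_mem_big P hi (e ▸ hmem), fun hho => ?_⟩, hidx⟩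
    rw [hidx, hh] at hho
    simp at hho

lemma Sset_fiber_big_hom {i : Fin (k+2)} (hi : 2 ≤ (i : ℕ)) (hh : P.hom i = true) :
    (Sset P).filter (fun x => idx P x = i) = {rep P i} := by
  have hne : (P.block i).Nonempty := P.blocksNonempty i hi
  have hrmem := rep_mem P hne
  have hridx : idx P (rep P i) = i := idx_eq P hrmem
  ext x
  simp only [Finset.mem_filter, mem_Sset, Finset.mem_singleton]
  constructor
  · rintro ⟨⟨-, himp⟩, hidx⟩
    have := himp (by rw [hidx]; exact hh)
    rw [hidx] at this
    exact this
  · intro hx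
    subst hx
    exact ⟨⟨fun e => zero_not_mem_big P hi (e ▸ hrmem), fun _ => by rw [hridx]⟩, hridx⟩

lemma block_fiber (i : Fin (k+2)) :
    Finset.univ.filter (fun x : Fin (n+1) => idx P x = i) = P.block i := by
  ext x
  simp only [Finset.mem_filter, Finset.mem_univ, true_and]
  exact ⟨fun h => h ▸ mem_block_idx P x, fun h => idx_eq P h⟩

lemma sum_card_blocks : ∑ i : Fin (k+2), (P.block i).card = n + 1 := by
  have h := Finset.card_eq_sum_card_fiberwise
    (f := idx P) (s := Finset.univ) (t := Finset.univ) (fun x _ => Finset.mem_univ _)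
  simp only [block_fiber] at h
  rw [Finset.card_univ, Fintype.card_fin] at h
  exact h.symm

lemma low_filter : Finset.univ.filter (fun i : Fin (k+2) => ¬ 2 ≤ (i : ℕ))
    = {(0 : Fin (k+2)), 1} := by
  ext i
  simp only [Finset.mem_filter, Finset.mem_univ, true_and, Finset.mem_insert,
    Finset.mem_singleton, not_le]
  constructor
  · intro h
    interval_cases hi : (i : ℕ)
    · left; ext; simp [hi]
    · right; ext; simp [hi]
  · rintro (rfl | rfl) <;> simp [Fin.val_one]

lemma zero_ne_one' : (0 : Fin (k+2)) ≠ 1 := by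
  intro h
  simpa [Fin.val_one] using congrArg Fin.val h

lemma sum_split (f : Fin (k+2) → ℕ) :
    ∑ i : Fin (k+2), f i
      = f 0 + f 1
        + (∑ i ∈ Finset.univ.filter
            (fun i : Fin (k+2) => 2 ≤ (i : ℕ) ∧ P.hom i = false), f i)
        + (∑ i ∈ Finset.univ.filter
            (fun i : Fin (k+2) => 2 ≤ (i : ℕ) ∧ P.hom i = true), f i) := by
  have hsplit := Finset.sum_filter_add_sum_filter_not Finset.univ
    (fun i : Fin (k+2) => 2 ≤ (i : ℕ)) f
  have hsplit2 := Finset.sum_filter_add_sum_filter_not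
    (Finset.univ.filter (fun i : Fin (k+2) => 2 ≤ (i : ℕ)))
    (fun i : Fin (k+2) => P.hom i = true) f
  rw [Finset.filter_filter, Finset.filter_filter] at hsplit2
  have hlow : ∑ i ∈ Finset.univ.filter (fun i : Fin (k+2) => ¬ 2 ≤ (i : ℕ)), f i
      = f 0 + f 1 := by
    rw [low_filter, Finset.sum_pair zero_ne_one']
  have hnot : (Finset.univ.filter (fun i : Fin (k+2) => 2 ≤ (i : ℕ) ∧ ¬ P.hom i = true))
      = Finset.univ.filter (fun i : Fin (k+2) => 2 ≤ (i : ℕ) ∧ P.hom i = false) := by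
    simp only [Bool.not_eq_true]
  rw [hnot] at hsplit2
  omega

lemma card_Sset :
    (Sset P).card =
      ((P.block 0).card - (if (0 : Fin (n + 1)) ∈ P.block 0 then 1 else 0)) +
      (∑ i ∈ Finset.univ.filter
          (fun i : Fin (k + 2) => 2 ≤ (i : ℕ) ∧ P.hom i = false), (P.block i).card) +
      (Finset.univ.filter
          (fun i : Fin (k + 2) => 2 ≤ (i : ℕ) ∧ P.hom i = true)).card := by
  have h1 : (Sset P).card
      = ∑ i : Fin (k+2), ((Sset P).filter (fun x => idx P x = i)).card :=
    Finset.card_eq_sum_card_fiberwise (fun x _ => Finset.mem_univ _)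
  rw [h1, sum_split P (fun i => ((Sset P).filter (fun x => idx P x = i)).card)]
  rw [Sset_fiber_zero, Sset_fiber_one]
  have e1 : ∑ i ∈ Finset.univ.filter
      (fun i : Fin (k+2) => 2 ≤ (i : ℕ) ∧ P.hom i = false),
      ((Sset P).filter (fun x => idx P x = i)).card
      = ∑ i ∈ Finset.univ.filter
      (fun i : Fin (k+2) => 2 ≤ (i : ℕ) ∧ P.hom i = false), (P.block i).card := by
    refine Finset.sum_congr rfl (fun i hi => ?_)
    obtain ⟨h2, hf⟩ := (Finset.mem_filter.mp hi).2
    rw [Sset_fiber_big_nonhom P h2 hf]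
  have e2 : ∑ i ∈ Finset.univ.filter
      (fun i : Fin (k+2) => 2 ≤ (i : ℕ) ∧ P.hom i = true),
      ((Sset P).filter (fun x => idx P x = i)).card
      = ∑ i ∈ Finset.univ.filter
      (fun i : Fin (k+2) => 2 ≤ (i : ℕ) ∧ P.hom i = true), 1 := by
    refine Finset.sum_congr rfl (fun i hi => ?_)
    obtain ⟨h2, hf⟩ := (Finset.mem_filter.mp hi).2
    rw [Sset_fiber_big_hom P h2 hf, Finset.card_singleton]
  rw [e1, e2, Finset.sum_const, smul_eq_mul, mul_one]
  have hcardz : ((P.block 0).erase 0).card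
      = (P.block 0).card - (if (0 : Fin (n + 1)) ∈ P.block 0 then 1 else 0) := by
    by_cases h : (0 : Fin (n+1)) ∈ P.block 0
    · rw [if_pos h, Finset.card_erase_of_mem h]
    · rw [if_neg h, Finset.erase_eq_of_notMem h, Nat.sub_zero]
  rw [hcardz]
  simp only [Finset.card_empty]
  omega

end SBPaux

/-- Dimension of the sliced preorder cone of a skewed binary partition `B` with
type `(b₋₁, b₀, b₁, …, b_k)`: the dimension of its linear span equals the sum
of the plain (unstarred, uncircled) entries of the type plus the number of
starred entries, and the codimension equals `|b₀| + ∑_{starred} (|b_i| - 1)`.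
(In terms of the blocks: `b₋₁ = |B₋₁| - [0 ∈ B₋₁]` is plain, `b₀ = 0` is plain
when `0 ∈ B₋₁` and `b₀ = |B₀| - 1` is circled when `0 ∈ B₀`, and for `i ≥ 1`,
`b_i = |B_i|`, starred exactly when `B_i` is homogeneous.) -/
theorem sliced_cone_dimension
    (n k : ℕ) (hn : 1 ≤ n) (P : SkewedBinaryPartition n k) :
    Module.finrank ℝ ↥(Submodule.span ℝ (sliceConeSBP P)) =
        ((P.block 0).card - (if (0 : Fin (n + 1)) ∈ P.block 0 then 1 else 0)) +
        (∑ i ∈ Finset.univ.filter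
            (fun i : Fin (k + 2) => 2 ≤ (i : ℕ) ∧ P.hom i = false), (P.block i).card) +
        (Finset.univ.filter
            (fun i : Fin (k + 2) => 2 ≤ (i : ℕ) ∧ P.hom i = true)).card ∧
    n - Module.finrank ℝ ↥(Submodule.span ℝ (sliceConeSBP P)) =
        (if (0 : Fin (n + 1)) ∈ P.block 1 then (P.block 1).card - 1 else 0) +
        ∑ i ∈ Finset.univ.filter
            (fun i : Fin (k + 2) => 2 ≤ (i : ℕ) ∧ P.hom i = true), ((P.block i).card - 1) := by
  classical
  have hrank : Module.finrank ℝ ↥(Submodule.span ℝ (sliceConeSBP P)) = (SBPaux.Sset P).card := by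
    rw [(LinearEquiv.ofEq _ _ (SBPaux.span_eq P)).finrank_eq, SBPaux.finrank_L]
  constructor
  · rw [hrank, SBPaux.card_Sset]
  · rw [hrank, SBPaux.card_Sset P]
    have htot := SBPaux.sum_card_blocks P
    rw [SBPaux.sum_split P (fun i => (P.block i).card)] at htot
    have hFC : ∑ i ∈ Finset.univ.filter
          (fun i : Fin (k+2) => 2 ≤ (i : ℕ) ∧ P.hom i = true), (P.block i).card
        = (∑ i ∈ Finset.univ.filter
            (fun i : Fin (k+2) => 2 ≤ (i : ℕ) ∧ P.hom i = true), ((P.block i).card - 1))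
          + (Finset.univ.filter
            (fun i : Fin (k+2) => 2 ≤ (i : ℕ) ∧ P.hom i = true)).card := by
      rw [Finset.card_eq_sum_ones, ← Finset.sum_add_distrib]
      refine Finset.sum_congr rfl (fun i hi => ?_)
      obtain ⟨h2, -⟩ := (Finset.mem_filter.mp hi).2
      have := Finset.card_pos.mpr (P.blocksNonempty i h2)
      omega
    by_cases h0 : (0 : Fin (n+1)) ∈ P.block 0
    · have hemp : P.block 1 = ∅ := by
        rcases P.zeroMem with h1 | ⟨-, -, he⟩
        · exact absurd h0
            (Finset.disjoint_left.mp (P.disj 1 0 (SBPaux.zero_ne_one' (k := k)).symm) h1)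
        · exact he
      have hnot1 : (0 : Fin (n+1)) ∉ P.block 1 := by rw [hemp]; simp
      have hcard1 : (P.block 1).card = 0 := by rw [hemp]; rfl
      have hcard0 : 1 ≤ (P.block 0).card := Finset.card_pos.mpr ⟨0, h0⟩
      rw [if_pos h0, if_neg hnot1]
      omega
    · have h1 : (0 : Fin (n+1)) ∈ P.block 1 := by
        rcases P.zeroMem with h1 | ⟨hm, -, -⟩
        · exact h1
        · exact absurd hm h0
      have hcard1 : 1 ≤ (P.block 1).card := Finset.card_pos.mpr ⟨0, h1⟩
      rw [if_neg h0, if_pos h1]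
      omega
end
end

section
/- Let B = (B_1,…,B_p) and C = (C_1,…,C_q) be binary partitions of {0,…,n}. Then the preorder associated to C is a contraction of the preorder associated to B — equivalently, by the correspondence between contractions and faces of preorder cones, σ̃(C) is a face of σ̃(B) — if and only if the following five conditions hold: (1) non-crossing: there are no indices i < i′ and j < j′ with B_i ∩ C_{j′} ≠ ∅ and B_{i′} ∩ C_j ≠ ∅; (2) every non-homogeneous block B_i intersects at most one non-homogeneous block of C; (3) every homogeneous block B_i intersects exactly one block of C, and that block is homogeneous; (4) every non-homogeneous block C_j intersects exactly one block of B, and that block is non-homogeneous; (5) every homogeneous block C_j that intersects exactly one block of B intersects a homogeneous block of B. -/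
noncomputable section

/-- A binary partition of `{0, 1, …, n}` into `p` (nonempty) blocks, each
declared homogeneous (`hom = true`) or non-homogeneous, with every singleton
block non-homogeneous. -/
structure BinaryPartition (n p : ℕ) where
  block : Fin p → Finset (Fin (n + 1))
  hom : Fin p → Bool
  blocksNonempty : ∀ i, (block i).Nonempty
  disj : ∀ i j, i ≠ j → Disjoint (block i) (block j)
  cover : ∀ x : Fin (n + 1), ∃ i, x ∈ block i
  singletonNonhom : ∀ i, (block i).card = 1 → hom i = false

/-- The sliced preorder cone of a binary partition. -/
def sliceConeBP {n p : ℕ} (B : BinaryPartition n p) : Set (Fin n → ℝ) :=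
  {c | (∀ i j : Fin p, i < j →
          ∀ a ∈ B.block i, ∀ b ∈ B.block j, extz n c a ≤ extz n c b) ∧
       ∀ i : Fin p, B.hom i = true →
          ∀ a ∈ B.block i, ∀ b ∈ B.block i, extz n c a = extz n c b}

/-- `F` is a face of the closed convex cone `σ ⊆ ℝⁿ`. -/
def IsConeFace (n : ℕ) (σ F : Set (Fin n → ℝ)) : Prop :=
  ∃ w : Fin n → ℝ, (∀ x ∈ σ, ∑ i, w i * x i ≤ 0) ∧
    F = {x ∈ σ | ∑ i, w i * x i = 0}


namespace BPaux

open Classical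

variable {n p : ℕ}

/-- index of the block containing x -/
def idx (B : BinaryPartition n p) (x : Fin (n + 1)) : Fin p := (B.cover x).choose

lemma mem_idx (B : BinaryPartition n p) (x : Fin (n + 1)) : x ∈ B.block (idx B x) :=
  (B.cover x).choose_spec

lemma idx_eq (B : BinaryPartition n p) {x : Fin (n + 1)} {i : Fin p}
    (h : x ∈ B.block i) : idx B x = i := by
  by_contra hne
  exact Finset.disjoint_left.mp (B.disj _ _ hne) (mem_idx B x) h

/-- the preorder associated to a binary partition -/
def leP (B : BinaryPartition n p) (x y : Fin (n + 1)) : Prop :=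
  x = y ∨ idx B x < idx B y ∨ (idx B x = idx B y ∧ B.hom (idx B x) = true)

lemma leP_refl (B : BinaryPartition n p) (x : Fin (n + 1)) : leP B x x := Or.inl rfl

lemma leP_trans (B : BinaryPartition n p) {x y z : Fin (n + 1)}
    (h1 : leP B x y) (h2 : leP B y z) : leP B x z := by
  rcases h1 with rfl | h1 | ⟨e1, hh1⟩
  · exact h2
  · rcases h2 with rfl | h2 | ⟨e2, _⟩
    · exact Or.inr (Or.inl h1)
    · exact Or.inr (Or.inl (h1.trans h2))
    · exact Or.inr (Or.inl (e2 ▸ h1))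
  · rcases h2 with rfl | h2 | ⟨e2, _⟩
    · exact Or.inr (Or.inr ⟨e1, hh1⟩)
    · exact Or.inr (Or.inl (e1 ▸ h2))
    · exact Or.inr (Or.inr ⟨e1.trans e2, hh1⟩)

/-- membership in the cone in terms of the preorder -/
lemma mem_slice_iff (B : BinaryPartition n p) (c : Fin n → ℝ) :
    c ∈ sliceConeBP B ↔ ∀ x y, leP B x y → extz n c x ≤ extz n c y := by
  constructor
  · rintro ⟨h1, h2⟩ x y (rfl | hlt | ⟨he, hh⟩)
    · exact le_refl _
    · exact h1 _ _ hlt x (mem_idx B x) y (mem_idx B y)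
    · exact le_of_eq (h2 _ hh x (mem_idx B x) y (he ▸ mem_idx B y))
  · intro h
    constructor
    · intro i j hij a ha b hb
      exact h a b (Or.inr (Or.inl (by rw [idx_eq B ha, idx_eq B hb]; exact hij)))
    · intro i hi a ha b hb
      refine le_antisymm (h a b ?_) (h b a ?_)
      · exact Or.inr (Or.inr (by rw [idx_eq B ha, idx_eq B hb]; exact ⟨rfl, hi⟩))
      · exact Or.inr (Or.inr (by rw [idx_eq B ha, idx_eq B hb]; exact ⟨rfl, hi⟩))

/-- any non-related pair can be strictly violated in the cone of a preorder -/
lemma exists_violate (ρ : Fin (n + 1) → Fin (n + 1) → Prop)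
    (hrefl : ∀ x, ρ x x) (htrans : ∀ x y z, ρ x y → ρ y z → ρ x z)
    {a b : Fin (n + 1)} (h : ¬ ρ a b) :
    ∃ c : Fin n → ℝ, (∀ x y, ρ x y → extz n c x ≤ extz n c y) ∧
      extz n c b < extz n c a := by
  set g : Fin (n + 1) → ℝ := fun x => if ρ x b then 0 else 1 with hg
  refine ⟨fun i => g i.succ - g 0, ?_, ?_⟩
  · have he : ∀ x, extz n (fun i => g i.succ - g 0) x = g x - g 0 := by
      intro x
      induction x using Fin.cases with
      | zero => simp [extz]
      | succ i => simp [extz]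
    intro x y hxy
    rw [he, he]
    have : g x ≤ g y := by
      by_cases hyb : ρ y b
      · simp [hg, hyb, htrans _ _ _ hxy hyb]
      · by_cases hxb : ρ x b <;> simp [hg, hyb, hxb]
    linarith
  · have he : ∀ x, extz n (fun i => g i.succ - g 0) x = g x - g 0 := by
      intro x
      induction x using Fin.cases with
      | zero => simp [extz]
      | succ i => simp [extz]
    rw [he, he]
    have h1 : g b = 0 := by simp [hg, hrefl b]
    have h2 : g a = 1 := by simp [hg, h]
    rw [h1, h2]; norm_num

end BPaux

namespace BPaux

open scoped Classical

variable {n p q : ℕ}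

/-- one step: a `B`-relation, or a reversed collapsed pair -/
def step (B : BinaryPartition n p) (C : BinaryPartition n q) (a b : Fin (n + 1)) : Prop :=
  leP B a b ∨ (leP B b a ∧ leP C a b)

def coeff {n : ℕ} (a : Fin (n + 1)) (i : Fin n) : ℝ := if a = i.succ then 1 else 0

lemma sum_coeff (a : Fin (n + 1)) (x : Fin n → ℝ) :
    ∑ i, coeff a i * x i = extz n x a := by
  induction a using Fin.cases with
  | zero =>
    have h : ∀ i : Fin n, coeff (0 : Fin (n + 1)) i * x i = 0 := by
      intro i; simp [coeff, (Fin.succ_ne_zero i).symm]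
    simp [h, extz]
  | succ j =>
    have h : ∀ i : Fin n, coeff (Fin.succ j) i * x i = if j = i then x i else 0 := by
      intro i
      simp only [coeff, Fin.succ_inj]
      split <;> simp
    rw [Finset.sum_congr rfl (fun i _ => h i), Finset.sum_ite_eq]
    simp [extz]

def wBC (B : BinaryPartition n p) (C : BinaryPartition n q) : Fin n → ℝ :=
  fun i => ∑ z : Fin (n + 1) × Fin (n + 1),
    if leP B z.1 z.2 ∧ leP C z.2 z.1 then coeff z.1 i - coeff z.2 i else 0

lemma sum_w (B : BinaryPartition n p) (C : BinaryPartition n q) (x : Fin n → ℝ) :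
    ∑ i, wBC B C i * x i = ∑ z : Fin (n + 1) × Fin (n + 1),
      if leP B z.1 z.2 ∧ leP C z.2 z.1 then extz n x z.1 - extz n x z.2 else 0 := by
  unfold wBC
  have h1 : ∀ i : Fin n, (∑ z : Fin (n + 1) × Fin (n + 1),
      if leP B z.1 z.2 ∧ leP C z.2 z.1 then coeff z.1 i - coeff z.2 i else 0) * x i
      = ∑ z : Fin (n + 1) × Fin (n + 1),
      (if leP B z.1 z.2 ∧ leP C z.2 z.1 then coeff z.1 i - coeff z.2 i else 0) * x i := by
    intro i; rw [Finset.sum_mul]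
  rw [Finset.sum_congr rfl (fun i _ => h1 i), Finset.sum_comm]
  apply Finset.sum_congr rfl
  intro z _
  by_cases hz : leP B z.1 z.2 ∧ leP C z.2 z.1
  · simp only [if_pos hz]
    rw [← sum_coeff z.1 x, ← sum_coeff z.2 x, ← Finset.sum_sub_distrib]
    apply Finset.sum_congr rfl; intro i _; ring
  · simp [if_neg hz]

lemma extz_linear (c d : Fin n → ℝ) (r s : ℝ) (x : Fin (n + 1)) :
    extz n (fun i => r * c i + s * d i) x = r * extz n c x + s * extz n d x := by
  induction x using Fin.cases <;> simp [extz]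

end BPaux

namespace BPaux

open scoped Classical

variable {n p q : ℕ}

lemma step_trans_le (B : BinaryPartition n p) (C : BinaryPartition n q)
    (h1 : ∀ x y, leP B x y → leP C x y) {a b : Fin (n + 1)}
    (h : Relation.ReflTransGen (step B C) a b) : leP C a b := by
  induction h with
  | refl => exact leP_refl C a
  | tail _ hs ih =>
    rcases hs with hs | ⟨_, hs⟩
    · exact leP_trans C ih (h1 _ _ hs)
    · exact leP_trans C ih hs

theorem face_iff (B : BinaryPartition n p) (C : BinaryPartition n q) :
    IsConeFace n (sliceConeBP B) (sliceConeBP C) ↔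
      (∀ x y, leP B x y → leP C x y) ∧
      (∀ x y, leP C x y → Relation.ReflTransGen (step B C) x y) := by
  constructor
  · rintro ⟨w, hw, hF⟩
    have hsub : sliceConeBP C ⊆ sliceConeBP B := by
      rw [hF]; intro x hx; exact hx.1
    have h1 : ∀ x y, leP B x y → leP C x y := by
      intro x y hxy
      by_contra hnot
      obtain ⟨c, hc, hlt⟩ := exists_violate (leP C) (leP_refl C)
        (fun _ _ _ => leP_trans C) hnot
      have hcC : c ∈ sliceConeBP C := (mem_slice_iff C c).2 hc
      have := (mem_slice_iff B c).1 (hsub hcC) x y hxy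
      linarith
    refine ⟨h1, ?_⟩
    intro a b hab
    by_contra hnT
    obtain ⟨c, hc, hlt⟩ := exists_violate (Relation.ReflTransGen (step B C))
      (fun _ => Relation.ReflTransGen.refl)
      (fun _ _ _ h h' => Relation.ReflTransGen.trans h h') hnT
    have hcB : c ∈ sliceConeBP B := by
      rw [mem_slice_iff]
      intro x y hxy
      exact hc x y (Relation.ReflTransGen.single (Or.inl hxy))
    -- the generic point of the C-cone
    set d : Fin n → ℝ := fun i => ((idx C i.succ : ℕ) : ℝ) - ((idx C 0 : ℕ) : ℝ) with hd
    have hed : ∀ x, extz n d x = ((idx C x : ℕ) : ℝ) - ((idx C 0 : ℕ) : ℝ) := by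
      intro x; induction x using Fin.cases <;> simp [extz, hd]
    have hdC : d ∈ sliceConeBP C := by
      rw [mem_slice_iff]
      intro x y hxy
      rw [hed, hed]
      rcases hxy with rfl | hlt2 | ⟨he2, _⟩
      · exact le_refl _
      · have : ((idx C x : ℕ) : ℝ) ≤ ((idx C y : ℕ) : ℝ) := by
          exact_mod_cast le_of_lt hlt2
        linarith
      · rw [he2]
    -- key claim
    have claim : ∀ x y, leP B x y →
        (extz n c x = extz n c y ∧ extz n d x ≤ extz n d y) ∨
        (extz n c x < extz n c y ∧ extz n d x < extz n d y) := by
      intro x y hxy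
      have hcle : extz n c x ≤ extz n c y :=
        hc x y (Relation.ReflTransGen.single (Or.inl hxy))
      rcases eq_or_lt_of_le hcle with heq | hlt'
      · left
        refine ⟨heq, ?_⟩
        have hCxy := h1 x y hxy
        rw [hed, hed]
        rcases hCxy with rfl | h' | ⟨h', _⟩
        · exact le_refl _
        · have : ((idx C x : ℕ) : ℝ) ≤ ((idx C y : ℕ) : ℝ) := by
            exact_mod_cast le_of_lt h'
          linarith
        · rw [h']
      · right
        refine ⟨hlt', ?_⟩
        have hCxy := h1 x y hxy
        have hnotyx : ¬ leP C y x := by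
          intro hyx
          have : Relation.ReflTransGen (step B C) y x :=
            Relation.ReflTransGen.single (Or.inr ⟨hxy, hyx⟩)
          have := hc y x this
          linarith
        have hltidx : idx C x < idx C y := by
          rcases hCxy with rfl | h' | ⟨h', hh⟩
          · exact absurd (leP_refl C _) hnotyx
          · exact h'
          · exact absurd (Or.inr (Or.inr ⟨h'.symm, h' ▸ hh⟩)) hnotyx
        rw [hed, hed]
        have : ((idx C x : ℕ) : ℝ) < ((idx C y : ℕ) : ℝ) := by exact_mod_cast hltidx
        linarith
    -- choose lambda
    set P : Finset (Fin (n + 1) × Fin (n + 1)) :=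
      Finset.univ.filter (fun z => leP B z.1 z.2 ∧ extz n c z.1 < extz n c z.2) with hP
    set lam : ℝ := if hPne : P.Nonempty then
        P.inf' hPne (fun z => (extz n d z.2 - extz n d z.1) / (extz n c z.2 - extz n c z.1))
      else 1 with hlam
    have hmemP : ∀ z ∈ P, leP B z.1 z.2 ∧ extz n c z.1 < extz n c z.2 := by
      intro z hz
      have := Finset.mem_filter.mp hz
      exact this.2
    have hlampos : 0 < lam := by
      rw [hlam]
      split
      · rename_i hPne
        rw [Finset.lt_inf'_iff]
        intro z hz
        obtain ⟨hzB, hzc⟩ := hmemP z hz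
        rcases claim z.1 z.2 hzB with ⟨heq, _⟩ | ⟨_, hdlt⟩
        · exact absurd heq (ne_of_lt hzc)
        · exact div_pos (by linarith) (by linarith)
      · norm_num
    have hlamle : ∀ z ∈ P, lam * (extz n c z.2 - extz n c z.1) ≤
        extz n d z.2 - extz n d z.1 := by
      intro z hz
      have hPne : P.Nonempty := ⟨z, hz⟩
      have h' : lam ≤ (extz n d z.2 - extz n d z.1) / (extz n c z.2 - extz n c z.1) := by
        rw [hlam, dif_pos hPne]
        exact Finset.inf'_le _ hz
      obtain ⟨hzB, hzc⟩ := hmemP z hz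
      rw [le_div_iff₀ (by linarith)] at h'
      linarith
    -- d - lam * c  is in the B cone
    have hdl : (fun i => d i - lam * c i) ∈ sliceConeBP B := by
      rw [mem_slice_iff]
      intro x y hxy
      have he1 : ∀ u, extz n (fun i => d i - lam * c i) u
          = extz n d u - lam * extz n c u := by
        intro u; induction u using Fin.cases <;> simp [extz]
      rw [he1, he1]
      rcases claim x y hxy with ⟨heq, hdle⟩ | ⟨hclt, _⟩
      · rw [heq]; linarith
      · have hmem : (x, y) ∈ P := by
          rw [hP, Finset.mem_filter]
          exact ⟨Finset.mem_univ _, hxy, hclt⟩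
        have := hlamle (x, y) hmem
        simp only at this
        linarith
    have hlc : (fun i => lam * c i) ∈ sliceConeBP B := by
      rw [mem_slice_iff]
      intro x y hxy
      have he1 : ∀ u, extz n (fun i => lam * c i) u = lam * extz n c u := by
        intro u; induction u using Fin.cases <;> simp [extz]
      rw [he1, he1]
      have : extz n c x ≤ extz n c y :=
        hc x y (Relation.ReflTransGen.single (Or.inl hxy))
      nlinarith
    -- sum splitting
    have hsum : ∑ i, w i * d i = (∑ i, w i * (lam * c i)) + ∑ i, w i * (d i - lam * c i) := by
      rw [← Finset.sum_add_distrib]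
      apply Finset.sum_congr rfl
      intro i _; ring
    have h0 : ∑ i, w i * d i = 0 := by
      have : d ∈ sliceConeBP C := hdC
      rw [hF] at this
      exact this.2
    have hA := hw _ hlc
    have hB2 := hw _ hdl
    have hA0 : ∑ i, w i * (lam * c i) = 0 := by linarith
    have hsc : ∑ i, w i * c i = 0 := by
      have h' : lam * ∑ i, w i * c i = 0 := by
        rw [Finset.mul_sum, ← hA0]
        apply Finset.sum_congr rfl
        intro i _; ring
      rcases mul_eq_zero.mp h' with h'' | h''
      · exact absurd h'' (ne_of_gt hlampos)
      · exact h''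
    have hcC : c ∈ sliceConeBP C := by
      rw [hF]; exact ⟨hcB, hsc⟩
    have := (mem_slice_iff C c).1 hcC a b hab
    linarith
  · rintro ⟨h1, h2⟩
    refine ⟨wBC B C, ?_, ?_⟩
    · intro x hx
      rw [sum_w]
      apply Finset.sum_nonpos
      intro z _
      split
      · rename_i hz
        have := (mem_slice_iff B x).1 hx z.1 z.2 hz.1
        linarith
      · exact le_refl 0
    · ext x
      simp only [Set.mem_setOf_eq]
      constructor
      · intro hxC
        have hxB : x ∈ sliceConeBP B := by
          rw [mem_slice_iff]
          intro a b hab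
          exact (mem_slice_iff C x).1 hxC a b (h1 a b hab)
        refine ⟨hxB, ?_⟩
        rw [sum_w]
        apply Finset.sum_eq_zero
        intro z _
        split
        · rename_i hz
          have hle1 := (mem_slice_iff C x).1 hxC z.1 z.2 (h1 _ _ hz.1)
          have hle2 := (mem_slice_iff C x).1 hxC z.2 z.1 hz.2
          linarith
        · rfl
      · rintro ⟨hxB, hsum0⟩
        have hnp : ∀ z ∈ (Finset.univ : Finset (Fin (n + 1) × Fin (n + 1))),
            (if leP B z.1 z.2 ∧ leP C z.2 z.1
              then extz n x z.1 - extz n x z.2 else 0) ≤ 0 := by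
          intro z _
          split
          · rename_i hz
            have := (mem_slice_iff B x).1 hxB z.1 z.2 hz.1
            linarith
          · exact le_refl 0
        rw [sum_w] at hsum0
        have hterms := (Finset.sum_eq_zero_iff_of_nonpos hnp).1 hsum0
        have hstep : ∀ a b, step B C a b → extz n x a ≤ extz n x b := by
          intro a b hab
          rcases hab with h | ⟨hba, hcab⟩
          · exact (mem_slice_iff B x).1 hxB a b h
          · have := hterms (b, a) (Finset.mem_univ _)
            rw [if_pos ⟨hba, hcab⟩] at this
            simp only at this
            linarith
        rw [mem_slice_iff]
        intro a b hab
        have hT := h2 a b hab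
        clear hab
        induction hT with
        | refl => exact le_refl _
        | tail _ hs ih => exact le_trans ih (hstep _ _ hs)

end BPaux

namespace BPaux

variable {n p q : ℕ}

lemma exists_step {α : Type*} {R : α → α → Prop} {x y : α}
    (h : Relation.ReflTransGen R x y) (hne : x ≠ y) :
    ∃ u, u ≠ x ∧ R x u ∧ Relation.ReflTransGen R u y := by
  revert hne
  induction h using Relation.ReflTransGen.head_induction_on with
  | refl => intro hne; exact absurd rfl hne
  | head h' hrt ih =>
    rename_i a c
    intro hne
    by_cases hca : c = a
    · subst hca
      exact ih hne
    · exact ⟨c, hca, h', hrt⟩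

lemma exists_ne_mem (B : BinaryPartition n p) {i : Fin p} (h : B.hom i = true)
    {x : Fin (n + 1)} (hx : x ∈ B.block i) :
    ∃ u, u ≠ x ∧ idx B u = i := by
  have hcard : 1 < (B.block i).card := by
    by_contra hc
    push_neg at hc
    have h1 : 1 ≤ (B.block i).card := Finset.card_pos.mpr ⟨x, hx⟩
    have : (B.block i).card = 1 := le_antisymm hc h1
    rw [B.singletonNonhom i this] at h
    exact Bool.false_ne_true h
  obtain ⟨u, hu, hux⟩ := Finset.exists_mem_ne hcard x
  exact ⟨u, hux, idx_eq B hu⟩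

section Conds

variable (B : BinaryPartition n p) (C : BinaryPartition n q)

def Cond1 : Prop := ∀ x y, idx B x < idx B y → idx C x ≤ idx C y
def Cond2 : Prop := ∀ x y, idx B x = idx B y → B.hom (idx B x) = false →
  C.hom (idx C x) = false → C.hom (idx C y) = false → idx C x = idx C y
def Cond3 : Prop := ∀ x y, idx B x = idx B y → B.hom (idx B x) = true →
  idx C x = idx C y ∧ C.hom (idx C x) = true
def Cond4 : Prop := ∀ x y, idx C x = idx C y → C.hom (idx C x) = false →
  idx B x = idx B y ∧ B.hom (idx B x) = false
def Cond5 : Prop := ∀ j, C.hom j = true →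
  (∀ x y, idx C x = j → idx C y = j → idx B x = idx B y) →
  ∀ x, idx C x = j → B.hom (idx B x) = true

end Conds

theorem combo_iff (B : BinaryPartition n p) (C : BinaryPartition n q) :
    ((∀ x y, leP B x y → leP C x y) ∧
      (∀ x y, leP C x y → Relation.ReflTransGen (step B C) x y)) ↔
    (Cond1 B C ∧ Cond2 B C ∧ Cond3 B C ∧ Cond4 B C ∧ Cond5 B C) := by
  constructor
  · rintro ⟨h1, h2⟩
    have cond1 : Cond1 B C := by
      intro x y hlt
      rcases h1 x y (Or.inr (Or.inl hlt)) with rfl | h | ⟨h, _⟩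
      · exact le_refl _
      · exact le_of_lt h
      · exact le_of_eq h
    have cond3 : Cond3 B C := by
      have pairNe : ∀ x y, x ≠ y → idx B x = idx B y → B.hom (idx B x) = true →
          idx C x = idx C y ∧ C.hom (idx C x) = true := by
        intro x y hne heq hhom
        have e1 := h1 x y (Or.inr (Or.inr ⟨heq, hhom⟩))
        have e2 := h1 y x (Or.inr (Or.inr ⟨heq.symm, heq ▸ hhom⟩))
        rcases e1 with rfl | h | ⟨h, hh⟩
        · exact absurd rfl hne
        · rcases e2 with rfl | h' | ⟨h', _⟩
          · exact absurd rfl hne.symm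
          · exact absurd h (lt_asymm h')
          · rw [h'] at h; exact absurd h (lt_irrefl _)
        · exact ⟨h, hh⟩
      intro x y heq hhom
      by_cases hxy : x = y
      · subst hxy
        obtain ⟨u, hux, hu⟩ := exists_ne_mem B hhom (mem_idx B x)
        have := pairNe x u (fun h => hux h.symm) hu.symm hhom
        exact ⟨rfl, this.2⟩
      · exact pairNe x y hxy heq hhom
    have cond4 : Cond4 B C := by
      intro x y hγeq hcf
      have hβeq : idx B x = idx B y := by
        rcases lt_trichotomy (idx B x) (idx B y) with h | h | h
        · rcases h1 x y (Or.inr (Or.inl h)) with rfl | h' | ⟨_, hh⟩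
          · rfl
          · rw [hγeq] at h'; exact absurd h' (lt_irrefl _)
          · rw [hh] at hcf; exact absurd hcf (by simp)
        · exact h
        · rcases h1 y x (Or.inr (Or.inl h)) with rfl | h' | ⟨_, hh⟩
          · rfl
          · rw [hγeq] at h'; exact absurd h' (lt_irrefl _)
          · rw [← hγeq] at hh; rw [hh] at hcf; exact absurd hcf (by simp)
      refine ⟨hβeq, ?_⟩
      cases hB : B.hom (idx B x)
      · rfl
      · have := (cond3 x x rfl hB).2
        rw [this] at hcf; exact absurd hcf (by simp)
    have no_mixed : ∀ x y, idx B x = idx B y → B.hom (idx B x) = false →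
        C.hom (idx C x) = false → C.hom (idx C y) = false →
        idx C x < idx C y → False := by
      intro x y hβ hBf hcxf hcyf hγ
      have hne : x ≠ y := by rintro rfl; exact absurd hγ (lt_irrefl _)
      have hT := h2 x y (Or.inr (Or.inl hγ))
      obtain ⟨u, hux, hR, hT'⟩ := exists_step hT hne
      have hCxu : leP C x u := by
        rcases hR with hb | ⟨_, hc⟩
        · exact h1 _ _ hb
        · exact hc
      have hCuy : leP C u y := step_trans_le B C h1 hT'
      have hγxu : idx C x < idx C u := by
        rcases hCxu with rfl | h | ⟨_, hh⟩
        · exact absurd rfl hux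
        · exact h
        · rw [hh] at hcxf; exact absurd hcxf (by simp)
      rcases hR with hb | ⟨hb, _⟩
      · have hβxu : idx B x < idx B u := by
          rcases hb with rfl | h | ⟨_, hh⟩
          · exact absurd rfl hux
          · exact h
          · rw [hh] at hBf; exact absurd hBf (by simp)
        have huy : idx C u < idx C y := by
          rcases hCuy with rfl | h | ⟨h, hh⟩
          · rw [← hβ] at hβxu
            exact absurd hβxu (lt_irrefl _)
          · exact h
          · rw [h] at hh; rw [hh] at hcyf; exact absurd hcyf (by simp)
        have := cond1 y u (by rw [← hβ]; exact hβxu)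
        exact absurd huy (not_lt.mpr this)
      · have hβux : idx B u < idx B x := by
          rcases hb with rfl | h | ⟨h, hh⟩
          · exact absurd rfl hux
          · exact h
          · rw [← h] at hBf; rw [hh] at hBf; exact absurd hBf (by simp)
        have := cond1 u x hβux
        exact absurd hγxu (not_lt.mpr this)
    have cond2 : Cond2 B C := by
      intro x y hβ hBf hcxf hcyf
      rcases lt_trichotomy (idx C x) (idx C y) with h | h | h
      · exact absurd (no_mixed x y hβ hBf hcxf hcyf h) (by simp)
      · exact h
      · exact absurd (no_mixed y x hβ.symm (hβ ▸ hBf) hcyf hcxf h) (by simp)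
    have cond5 : Cond5 B C := by
      intro j hcj hone x hγx
      by_contra hBf'
      have hBf : B.hom (idx B x) = false := by
        cases hB : B.hom (idx B x)
        · rfl
        · exact absurd hB hBf'
      have hxj : x ∈ C.block j := by rw [← hγx]; exact mem_idx C x
      obtain ⟨y, hyx, hγy⟩ := exists_ne_mem C hcj hxj
      have hβxy : idx B x = idx B y := hone x y hγx hγy
      have hne : x ≠ y := fun h => hyx h.symm
      have hT := h2 x y (Or.inr (Or.inr ⟨hγx.trans hγy.symm, by rw [hγx]; exact hcj⟩))
      obtain ⟨u, hux, hR, hT'⟩ := exists_step hT hne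
      have hCxu : leP C x u := by
        rcases hR with hb | ⟨_, hc⟩
        · exact h1 _ _ hb
        · exact hc
      have hCuy : leP C u y := step_trans_le B C h1 hT'
      rcases hR with hb | ⟨hb, _⟩
      · have hβxu : idx B x < idx B u := by
          rcases hb with rfl | h | ⟨_, hh⟩
          · exact absurd rfl hux
          · exact h
          · rw [hh] at hBf; exact absurd hBf (by simp)
        have hult : idx C u < j := by
          rcases hCuy with rfl | h | ⟨h, _⟩
          · rw [← hβxy] at hβxu; exact absurd hβxu (lt_irrefl _)
          · rw [hγy] at h; exact h
          · rw [hγy] at h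
            have := hone u x h hγx
            rw [this] at hβxu; exact absurd hβxu (lt_irrefl _)
        rcases hCxu with rfl | h | ⟨h, _⟩
        · exact absurd rfl hux
        · rw [hγx] at h; exact absurd hult (not_lt.mpr (le_of_lt h))
        · rw [hγx] at h
          rw [← h] at hult; exact absurd hult (lt_irrefl _)
      · have hβux : idx B u < idx B x := by
          rcases hb with rfl | h | ⟨h, hh⟩
          · exact absurd rfl hux
          · exact h
          · rw [← h] at hBf; rw [hh] at hBf; exact absurd hBf (by simp)
        have hjlt : j < idx C u := by
          rcases hCxu with rfl | h | ⟨h, _⟩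
          · exact absurd rfl hux
          · rw [hγx] at h; exact h
          · rw [hγx] at h
            have := hone u x h.symm hγx
            rw [this] at hβux; exact absurd hβux (lt_irrefl _)
        rcases hCuy with rfl | h | ⟨h, _⟩
        · rw [← hβxy] at hβux; exact absurd hβux (lt_irrefl _)
        · rw [hγy] at h; exact absurd hjlt (not_lt.mpr (le_of_lt h))
        · rw [hγy] at h
          have := hone u x h hγx
          rw [this] at hβux; exact absurd hβux (lt_irrefl _)
    exact ⟨cond1, cond2, cond3, cond4, cond5⟩
  · rintro ⟨cond1, cond2, cond3, cond4, cond5⟩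
    have helperA : ∀ {x : Fin (n + 1)} {j : Fin q}, C.hom j = true → idx C x = j →
        B.hom (idx B x) = false → ∃ z, idx C z = j ∧ idx B z ≠ idx B x := by
      intro x j hcj hγ hBf
      by_contra h
      push_neg at h
      have hone : ∀ u v, idx C u = j → idx C v = j → idx B u = idx B v :=
        fun u v hu hv => (h u hu).trans (h v hv).symm
      have := cond5 j hcj hone x hγ
      rw [hBf] at this; exact Bool.false_ne_true this
    have h1 : ∀ x y, leP B x y → leP C x y := by
      intro x y hxy
      rcases hxy with rfl | hlt | ⟨heq, hhom⟩
      · exact leP_refl C x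
      · have hle := cond1 x y hlt
        rcases lt_or_eq_of_le hle with h | h
        · exact Or.inr (Or.inl h)
        · cases hc : C.hom (idx C x)
          · have := (cond4 x y h hc).1
            rw [this] at hlt; exact absurd hlt (lt_irrefl _)
          · exact Or.inr (Or.inr ⟨h, hc⟩)
      · obtain ⟨hceq, hchom⟩ := cond3 x y heq hhom
        exact Or.inr (Or.inr ⟨hceq, hchom⟩)
    refine ⟨h1, ?_⟩
    intro x y hxy
    rcases hxy with rfl | hγ | ⟨hγeq, hchom⟩
    · exact Relation.ReflTransGen.refl
    · rcases lt_trichotomy (idx B x) (idx B y) with hβ | hβ | hβ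
      · exact Relation.ReflTransGen.single (Or.inl (Or.inr (Or.inl hβ)))
      · by_cases hBi : B.hom (idx B x) = true
        · have := (cond3 x y hβ hBi).1
          rw [this] at hγ; exact absurd hγ (lt_irrefl _)
        · have hBf : B.hom (idx B x) = false := by
            cases hB : B.hom (idx B x)
            · rfl
            · exact absurd hB hBi
          by_cases hcx : C.hom (idx C x) = true
          · obtain ⟨z, hz1, hz2⟩ := helperA hcx rfl hBf
            have hzlt : idx B z < idx B x := by
              rcases lt_trichotomy (idx B z) (idx B x) with h | h | h
              · exact h
              · exact absurd h hz2
              · have := cond1 y z (by rw [← hβ]; exact h)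
                rw [hz1] at this
                exact absurd hγ (not_lt.mpr this)
            refine Relation.ReflTransGen.head (b := z)
              (Or.inr ⟨Or.inr (Or.inl hzlt), Or.inr (Or.inr ⟨hz1.symm, hcx⟩)⟩) ?_
            exact Relation.ReflTransGen.single
              (Or.inl (Or.inr (Or.inl (by rw [← hβ]; exact hzlt))))
          · by_cases hcy : C.hom (idx C y) = true
            · obtain ⟨z, hz1, hz2⟩ := helperA hcy rfl (by rw [← hβ]; exact hBf)
              have hzgt : idx B y < idx B z := by
                rcases lt_trichotomy (idx B z) (idx B y) with h | h | h
                · have := cond1 z x (by rw [hβ]; exact h)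
                  rw [hz1] at this
                  exact absurd hγ (not_lt.mpr this)
                · exact absurd h hz2
                · exact h
              refine Relation.ReflTransGen.head (b := z)
                (Or.inl (Or.inr (Or.inl (by rw [hβ]; exact hzgt)))) ?_
              exact Relation.ReflTransGen.single
                (Or.inr ⟨Or.inr (Or.inl hzgt), Or.inr (Or.inr ⟨hz1, by rw [hz1]; exact hcy⟩)⟩)
            · have hcxf : C.hom (idx C x) = false := by
                cases h : C.hom (idx C x)
                · rfl
                · exact absurd h hcx
              have hcyf : C.hom (idx C y) = false := by
                cases h : C.hom (idx C y)
                · rfl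
                · exact absurd h hcy
              have := cond2 x y hβ hBf hcxf hcyf
              rw [this] at hγ; exact absurd hγ (lt_irrefl _)
      · have := cond1 y x hβ
        exact absurd hγ (not_lt.mpr this)
    · by_cases hxy' : x = y
      · subst hxy'; exact Relation.ReflTransGen.refl
      · rcases lt_trichotomy (idx B x) (idx B y) with hβ | hβ | hβ
        · exact Relation.ReflTransGen.single (Or.inl (Or.inr (Or.inl hβ)))
        · by_cases hBi : B.hom (idx B x) = true
          · exact Relation.ReflTransGen.single (Or.inl (Or.inr (Or.inr ⟨hβ, hBi⟩)))
          · have hBf : B.hom (idx B x) = false := by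
              cases hB : B.hom (idx B x)
              · rfl
              · exact absurd hB hBi
            obtain ⟨z, hz1, hz2⟩ := helperA hchom rfl hBf
            rcases lt_trichotomy (idx B z) (idx B x) with h | h | h
            · refine Relation.ReflTransGen.head (b := z)
                (Or.inr ⟨Or.inr (Or.inl h), Or.inr (Or.inr ⟨hz1.symm, hchom⟩)⟩) ?_
              exact Relation.ReflTransGen.single
                (Or.inl (Or.inr (Or.inl (by rw [← hβ]; exact h))))
            · exact absurd h hz2
            · refine Relation.ReflTransGen.head (b := z)
                (Or.inl (Or.inr (Or.inl h))) ?_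
              refine Relation.ReflTransGen.single
                (Or.inr ⟨Or.inr (Or.inl (by rw [← hβ]; exact h)),
                  Or.inr (Or.inr ⟨hz1.trans hγeq, by rw [hz1]; exact hchom⟩)⟩)
        · exact Relation.ReflTransGen.single
            (Or.inr ⟨Or.inr (Or.inl hβ), Or.inr (Or.inr ⟨hγeq, hchom⟩)⟩)

end BPaux

namespace BPaux

variable {n p q : ℕ}

lemma natcard_le_one {α : Type*} [Finite α] (h : ∀ a b : α, a = b) : Nat.card α ≤ 1 := by
  rcases isEmpty_or_nonempty α with he | hne
  · simp [Nat.card_of_isEmpty]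
  · obtain ⟨a⟩ := hne
    exact le_of_eq (Nat.card_eq_one_iff_exists.mpr ⟨a, fun y => h y a⟩)

lemma eq_of_natcard_le_one {α : Type*} [Finite α] (h : Nat.card α ≤ 1) (a b : α) : a = b := by
  haveI : Nonempty α := ⟨a⟩
  have h1 : 0 < Nat.card α := Nat.card_pos (α := α)
  obtain ⟨x, hx⟩ := Nat.card_eq_one_iff_exists.mp (le_antisymm h h1)
  rw [hx a, hx b]

section Trans

variable (B : BinaryPartition n p) (C : BinaryPartition n q)

lemma inter_ne (i : Fin p) (j : Fin q) :
    (B.block i ∩ C.block j).Nonempty ↔ ∃ x, idx B x = i ∧ idx C x = j := by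
  constructor
  · rintro ⟨x, hx⟩
    rw [Finset.mem_inter] at hx
    exact ⟨x, idx_eq B hx.1, idx_eq C hx.2⟩
  · rintro ⟨x, hx1, hx2⟩
    exact ⟨x, Finset.mem_inter.mpr ⟨hx1 ▸ mem_idx B x, hx2 ▸ mem_idx C x⟩⟩

lemma cond1_iff : Cond1 B C ↔
    ¬ ∃ (i i' : Fin p) (j j' : Fin q), i < i' ∧ j < j' ∧
      (B.block i ∩ C.block j').Nonempty ∧ (B.block i' ∩ C.block j).Nonempty := by
  constructor
  · rintro hc ⟨i, i', j, j', hii, hjj, hne1, hne2⟩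
    obtain ⟨x, hx1, hx2⟩ := (inter_ne B C i j').mp hne1
    obtain ⟨y, hy1, hy2⟩ := (inter_ne B C i' j).mp hne2
    have := hc x y (by rw [hx1, hy1]; exact hii)
    rw [hx2, hy2] at this
    exact absurd hjj (not_lt.mpr this)
  · intro hg x y hβ
    by_contra hn
    push_neg at hn
    exact hg ⟨idx B x, idx B y, idx C y, idx C x, hβ, hn,
      (inter_ne B C _ _).mpr ⟨x, rfl, rfl⟩, (inter_ne B C _ _).mpr ⟨y, rfl, rfl⟩⟩

lemma cond2_iff : Cond2 B C ↔
    ∀ i, B.hom i = false →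
      Nat.card {j : Fin q // C.hom j = false ∧ (B.block i ∩ C.block j).Nonempty} ≤ 1 := by
  constructor
  · intro hc i hi
    apply natcard_le_one
    rintro ⟨j1, hcj1, hne1⟩ ⟨j2, hcj2, hne2⟩
    obtain ⟨x, hx1, hx2⟩ := (inter_ne B C i j1).mp hne1
    obtain ⟨y, hy1, hy2⟩ := (inter_ne B C i j2).mp hne2
    have := hc x y (hx1.trans hy1.symm) (by rw [hx1]; exact hi)
      (by rw [hx2]; exact hcj1) (by rw [hy2]; exact hcj2)
    rw [hx2, hy2] at this
    exact Subtype.ext this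
  · intro hg x y hβ hBf hcx hcy
    have h := hg (idx B x) hBf
    have := eq_of_natcard_le_one h
      ⟨idx C x, hcx, (inter_ne B C _ _).mpr ⟨x, rfl, rfl⟩⟩
      ⟨idx C y, hcy, (inter_ne B C _ _).mpr ⟨y, hβ.symm, rfl⟩⟩
    exact congrArg Subtype.val this

lemma cond3_iff : Cond3 B C ↔
    ∀ i, B.hom i = true →
      Nat.card {j : Fin q // (B.block i ∩ C.block j).Nonempty} = 1 ∧
      ∀ j, (B.block i ∩ C.block j).Nonempty → C.hom j = true := by
  constructor
  · intro hc i hi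
    obtain ⟨x0, hx0⟩ := B.blocksNonempty i
    have hx0i : idx B x0 = i := idx_eq B hx0
    constructor
    · apply Nat.card_eq_one_iff_exists.mpr
      refine ⟨⟨idx C x0, (inter_ne B C _ _).mpr ⟨x0, hx0i, rfl⟩⟩, ?_⟩
      rintro ⟨j, hne⟩
      obtain ⟨y, hy1, hy2⟩ := (inter_ne B C i j).mp hne
      have := (hc y x0 (hy1.trans hx0i.symm) (by rw [hy1]; exact hi)).1
      rw [hy2] at this
      exact Subtype.ext this
    · intro j hne
      obtain ⟨y, hy1, hy2⟩ := (inter_ne B C i j).mp hne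
      have := (hc y y rfl (by rw [hy1]; exact hi)).2
      rw [hy2] at this
      exact this
  · intro hg x y hβ hhom
    obtain ⟨h1, h2⟩ := hg (idx B x) hhom
    obtain ⟨z, hz⟩ := Nat.card_eq_one_iff_exists.mp h1
    have e1 := hz ⟨idx C x, (inter_ne B C _ _).mpr ⟨x, rfl, rfl⟩⟩
    have e2 := hz ⟨idx C y, (inter_ne B C _ _).mpr ⟨y, hβ.symm, rfl⟩⟩
    refine ⟨?_, h2 (idx C x) ((inter_ne B C _ _).mpr ⟨x, rfl, rfl⟩)⟩
    have := e1.trans e2.symm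
    exact congrArg Subtype.val this

lemma cond4_iff : Cond4 B C ↔
    ∀ j, C.hom j = false →
      Nat.card {i : Fin p // (B.block i ∩ C.block j).Nonempty} = 1 ∧
      ∀ i, (B.block i ∩ C.block j).Nonempty → B.hom i = false := by
  constructor
  · intro hc j hj
    obtain ⟨x0, hx0⟩ := C.blocksNonempty j
    have hx0j : idx C x0 = j := idx_eq C hx0
    constructor
    · apply Nat.card_eq_one_iff_exists.mpr
      refine ⟨⟨idx B x0, (inter_ne B C _ _).mpr ⟨x0, rfl, hx0j⟩⟩, ?_⟩
      rintro ⟨i, hne⟩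
      obtain ⟨y, hy1, hy2⟩ := (inter_ne B C i j).mp hne
      have := (hc y x0 (hy2.trans hx0j.symm) (by rw [hy2]; exact hj)).1
      rw [hy1] at this
      exact Subtype.ext this
    · intro i hne
      obtain ⟨y, hy1, hy2⟩ := (inter_ne B C i j).mp hne
      have := (hc y y rfl (by rw [hy2]; exact hj)).2
      rw [hy1] at this
      exact this
  · intro hg x y hγ hcf
    obtain ⟨h1, h2⟩ := hg (idx C x) hcf
    obtain ⟨z, hz⟩ := Nat.card_eq_one_iff_exists.mp h1
    have e1 := hz ⟨idx B x, (inter_ne B C _ _).mpr ⟨x, rfl, rfl⟩⟩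
    have e2 := hz ⟨idx B y, (inter_ne B C _ _).mpr ⟨y, rfl, hγ.symm⟩⟩
    refine ⟨congrArg Subtype.val (e1.trans e2.symm),
      h2 (idx B x) ((inter_ne B C _ _).mpr ⟨x, rfl, rfl⟩)⟩

lemma cond5_iff : Cond5 B C ↔
    ∀ j, C.hom j = true →
      Nat.card {i : Fin p // (B.block i ∩ C.block j).Nonempty} = 1 →
      ∃ i, (B.block i ∩ C.block j).Nonempty ∧ B.hom i = true := by
  constructor
  · intro hc j hj hcard
    have hone : ∀ x y, idx C x = j → idx C y = j → idx B x = idx B y := by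
      intro x y hx hy
      have := eq_of_natcard_le_one (le_of_eq hcard)
        ⟨idx B x, (inter_ne B C _ _).mpr ⟨x, rfl, hx⟩⟩
        ⟨idx B y, (inter_ne B C _ _).mpr ⟨y, rfl, hy⟩⟩
      exact congrArg Subtype.val this
    obtain ⟨x0, hx0⟩ := C.blocksNonempty j
    have hx0j : idx C x0 = j := idx_eq C hx0
    exact ⟨idx B x0, (inter_ne B C _ _).mpr ⟨x0, rfl, hx0j⟩,
      hc j hj hone x0 hx0j⟩
  · intro hg j hj hone x hγx
    have hcard : Nat.card {i : Fin p // (B.block i ∩ C.block j).Nonempty} = 1 := by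
      apply Nat.card_eq_one_iff_exists.mpr
      refine ⟨⟨idx B x, (inter_ne B C _ _).mpr ⟨x, rfl, hγx⟩⟩, ?_⟩
      rintro ⟨i, hne⟩
      obtain ⟨y, hy1, hy2⟩ := (inter_ne B C i j).mp hne
      have := hone y x hy2 hγx
      rw [this] at hy1
      exact Subtype.ext hy1.symm
    obtain ⟨i, hne, hi⟩ := hg j hj hcard
    obtain ⟨z, hz1, hz2⟩ := (inter_ne B C i j).mp hne
    have := hone z x hz2 hγx
    rw [this] at hz1
    rw [hz1]; exact hi

end Trans

end BPaux

/-- Characterization of contraction of binary partitions (equivalently, of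
`σ̃(C)` being a face of `σ̃(B)`) in terms of the bipartite intersection graph
`G(B, C)`: non-crossing plus the four degree conditions. -/
theorem binary_partition_contraction_iff_graph
    (n p q : ℕ) (hn : 1 ≤ n)
    (B : BinaryPartition n p) (C : BinaryPartition n q) :
    IsConeFace n (sliceConeBP B) (sliceConeBP C) ↔
      ((¬ ∃ (i i' : Fin p) (j j' : Fin q), i < i' ∧ j < j' ∧
          (B.block i ∩ C.block j').Nonempty ∧ (B.block i' ∩ C.block j).Nonempty) ∧
       (∀ i, B.hom i = false →
          Nat.card {j : Fin q // C.hom j = false ∧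
            (B.block i ∩ C.block j).Nonempty} ≤ 1) ∧
       (∀ i, B.hom i = true →
          Nat.card {j : Fin q // (B.block i ∩ C.block j).Nonempty} = 1 ∧
          ∀ j, (B.block i ∩ C.block j).Nonempty → C.hom j = true) ∧
       (∀ j, C.hom j = false →
          Nat.card {i : Fin p // (B.block i ∩ C.block j).Nonempty} = 1 ∧
          ∀ i, (B.block i ∩ C.block j).Nonempty → B.hom i = false) ∧
       (∀ j, C.hom j = true →
          Nat.card {i : Fin p // (B.block i ∩ C.block j).Nonempty} = 1 →
          ∃ i, (B.block i ∩ C.block j).Nonempty ∧ B.hom i = true)) := by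
  rw [BPaux.face_iff, BPaux.combo_iff]
  exact and_congr (BPaux.cond1_iff B C) (and_congr (BPaux.cond2_iff B C)
    (and_congr (BPaux.cond3_iff B C) (and_congr (BPaux.cond4_iff B C)
      (BPaux.cond5_iff B C))))
end
end

section
/- Let B = (B_1,…,B_p) and C = (C_1,…,C_q) be two tuples of nonempty pairwise disjoint sets, each partitioning {0,1,…,n}, and suppose the pair (B,C) is non-crossing. Then for i ∈ [p] and j ∈ [q]: (a) C_j ∩ B_i ≠ ∅ if and only if |C_1|+⋯+|C_{j−1}| < |B_1|+⋯+|B_i| and |B_1|+⋯+|B_{i−1}| < |C_1|+⋯+|C_j|; (b) B_i ⊆ C_j if and only if |C_1|+⋯+|C_{j−1}| ≤ |B_1|+⋯+|B_{i−1}| and |B_1|+⋯+|B_i| ≤ |C_1|+⋯+|C_j|; (c) C_j ⊆ B_i if and only if |C_1|+⋯+|C_j| ≤ |B_1|+⋯+|B_i| and |B_1|+⋯+|B_{i−1}| ≤ |C_1|+⋯+|C_{j−1}|. -/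
noncomputable section

/-- Partial sum of block sizes: `|A₁| + ⋯ + |A_t|` (the first `t` blocks). -/
def psum {M m : ℕ} (A : Fin m → Finset (Fin M)) (t : ℕ) : ℕ :=
  ∑ x ∈ Finset.univ.filter (fun x : Fin m => (x : ℕ) < t), (A x).card

/-- The set of elements whose block index is `< t`. -/
def Sset {N m : ℕ} (f : Fin N → Fin m) (t : ℕ) : Finset (Fin N) :=
  Finset.univ.filter fun x => (f x : ℕ) < t

lemma mem_Sset {N m : ℕ} {f : Fin N → Fin m} {t : ℕ} {x : Fin N} :
    x ∈ Sset f t ↔ (f x : ℕ) < t := by simp [Sset]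

lemma Sset_mono {N m : ℕ} (f : Fin N → Fin m) {t t' : ℕ} (h : t ≤ t') :
    Sset f t ⊆ Sset f t' := fun x hx => mem_Sset.2 (lt_of_lt_of_le (mem_Sset.1 hx) h)

lemma Sset_chain {N p q : ℕ} (f : Fin N → Fin p) (g : Fin N → Fin q)
    (key : ∀ x y, f x < f y → g x ≤ g y) (t s : ℕ) :
    Sset f t ⊆ Sset g s ∨ Sset g s ⊆ Sset f t := by
  by_contra h
  push_neg at h
  obtain ⟨x, hx, hx'⟩ := Finset.not_subset.1 h.1
  obtain ⟨y, hy, hy'⟩ := Finset.not_subset.1 h.2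
  have h1 : (f x : ℕ) < t := mem_Sset.1 hx
  have h2 : ¬ (g x : ℕ) < s := fun hc => hx' (mem_Sset.2 hc)
  have h3 : (g y : ℕ) < s := mem_Sset.1 hy
  have h4 : ¬ (f y : ℕ) < t := fun hc => hy' (mem_Sset.2 hc)
  have : f x < f y := by
    rw [Fin.lt_def]; omega
  have := key x y this
  rw [Fin.le_def] at this
  omega

lemma Sset_card_lt {N m : ℕ} (f : Fin N → Fin m) (i : Fin m)
    (hfne : ∃ x, f x = i) :
    (Sset f (i : ℕ)).card < (Sset f ((i : ℕ) + 1)).card := by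
  obtain ⟨x, rfl⟩ := hfne
  refine Finset.card_lt_card ⟨Sset_mono f (Nat.le_succ _), fun h => ?_⟩
  have hx : x ∈ Sset f ((f x : ℕ) + 1) := mem_Sset.2 (Nat.lt_succ_self _)
  exact absurd (mem_Sset.1 (h hx)) (lt_irrefl _)

lemma aux_subset {N p q : ℕ} (f : Fin N → Fin p) (g : Fin N → Fin q)
    (key : ∀ x y, f x < f y → g x ≤ g y)
    (key' : ∀ x y, g x < g y → f x ≤ f y)
    (hfne : ∀ i, ∃ x, f x = i)
    (i : Fin p) (j : Fin q) :
    (∀ x, f x = i → g x = j) ↔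
      (Sset g (j : ℕ)).card ≤ (Sset f (i : ℕ)).card ∧
      (Sset f ((i : ℕ) + 1)).card ≤ (Sset g ((j : ℕ) + 1)).card := by
  constructor
  · intro h
    obtain ⟨z, hz⟩ := hfne i
    have hgz : g z = j := h z hz
    constructor
    · refine Finset.card_le_card fun y hy => mem_Sset.2 ?_
      have hyj : (g y : ℕ) < (j : ℕ) := mem_Sset.1 hy
      have hle : f y ≤ f z := key' y z (by rw [Fin.lt_def, hgz]; omega)
      rw [Fin.le_def, hz] at hle
      rcases lt_or_eq_of_le hle with h' | h'
      · exact h'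
      · exfalso
        have : f y = i := Fin.ext h'
        have := h y this
        rw [this] at hyj; omega
    · refine Finset.card_le_card fun y hy => mem_Sset.2 ?_
      have hyi : (f y : ℕ) < (i : ℕ) + 1 := mem_Sset.1 hy
      rcases Nat.lt_or_ge (f y : ℕ) (i : ℕ) with h' | h'
      · have hle : g y ≤ g z := key y z (by rw [Fin.lt_def, hz]; omega)
        rw [Fin.le_def, hgz] at hle; omega
      · have : f y = i := Fin.ext (by omega)
        rw [h y this]; omega
  · rintro ⟨h1, h2⟩
    have c1 : Sset g (j : ℕ) ⊆ Sset f (i : ℕ) := by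
      rcases Sset_chain f g key (i : ℕ) (j : ℕ) with h | h
      · rw [Finset.eq_of_subset_of_card_le h h1]
      · exact h
    have c2 : Sset f ((i : ℕ) + 1) ⊆ Sset g ((j : ℕ) + 1) := by
      rcases Sset_chain f g key ((i : ℕ) + 1) ((j : ℕ) + 1) with h | h
      · exact h
      · rw [Finset.eq_of_subset_of_card_le h h2]
    intro x hx
    have hx1 : x ∈ Sset g ((j : ℕ) + 1) := c2 (mem_Sset.2 (by rw [hx]; omega))
    have hx2 : x ∉ Sset g (j : ℕ) := fun hc => by
      have := mem_Sset.1 (c1 hc)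
      rw [hx] at this; omega
    have := mem_Sset.1 hx1
    have h' : ¬ (g x : ℕ) < (j : ℕ) := fun hc => hx2 (mem_Sset.2 hc)
    exact Fin.ext (by omega)

lemma aux_inter {N p q : ℕ} (f : Fin N → Fin p) (g : Fin N → Fin q)
    (key : ∀ x y, f x < f y → g x ≤ g y)
    (key' : ∀ x y, g x < g y → f x ≤ f y)
    (hfne : ∀ i, ∃ x, f x = i) (hgne : ∀ j, ∃ x, g x = j)
    (i : Fin p) (j : Fin q) :
    (∃ x, f x = i ∧ g x = j) ↔
      (Sset g (j : ℕ)).card < (Sset f ((i : ℕ) + 1)).card ∧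
      (Sset f (i : ℕ)).card < (Sset g ((j : ℕ) + 1)).card := by
  constructor
  · rintro ⟨x, hfx, hgx⟩
    constructor
    · refine Finset.card_lt_card ⟨fun y hy => mem_Sset.2 ?_, fun h => ?_⟩
      · have hyj : (g y : ℕ) < (j : ℕ) := mem_Sset.1 hy
        have hle : f y ≤ f x := key' y x (by rw [Fin.lt_def, hgx]; omega)
        rw [Fin.le_def, hfx] at hle; omega
      · have hx : x ∈ Sset f ((i : ℕ) + 1) := mem_Sset.2 (by rw [hfx]; omega)
        have := mem_Sset.1 (h hx)
        rw [hgx] at this; omega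
    · refine Finset.card_lt_card ⟨fun y hy => mem_Sset.2 ?_, fun h => ?_⟩
      · have hyi : (f y : ℕ) < (i : ℕ) := mem_Sset.1 hy
        have hle : g y ≤ g x := key y x (by rw [Fin.lt_def, hfx]; omega)
        rw [Fin.le_def, hgx] at hle; omega
      · have hx : x ∈ Sset g ((j : ℕ) + 1) := mem_Sset.2 (by rw [hgx]; omega)
        have := mem_Sset.1 (h hx)
        rw [hfx] at this; omega
  · rintro ⟨h1, h2⟩
    have c1 : Sset g (j : ℕ) ⊆ Sset f ((i : ℕ) + 1) := by
      rcases Sset_chain f g key ((i : ℕ) + 1) (j : ℕ) with h | h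
      · exact absurd (Finset.card_le_card h) (by omega)
      · exact h
    have c2 : Sset f (i : ℕ) ⊆ Sset g ((j : ℕ) + 1) := by
      rcases Sset_chain f g key (i : ℕ) ((j : ℕ) + 1) with h | h
      · exact h
      · exact absurd (Finset.card_le_card h) (by omega)
    -- the union Sset f i ∪ Sset g j equals one of them, by the chain property
    obtain ⟨V, hVf, hVg, hVcard1, hVcard2⟩ :
        ∃ V : Finset (Fin N), Sset f (i : ℕ) ⊆ V ∧ Sset g (j : ℕ) ⊆ V ∧
          V.card < (Sset f ((i : ℕ) + 1)).card ∧ V.card < (Sset g ((j : ℕ) + 1)).card := by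
      rcases Sset_chain f g key (i : ℕ) (j : ℕ) with h | h
      · exact ⟨Sset g (j : ℕ), h, Finset.Subset.refl _, h1, Sset_card_lt g j (hgne j)⟩
      · exact ⟨Sset f (i : ℕ), Finset.Subset.refl _, h,
          Sset_card_lt f i (hfne i), h2⟩
    rcases Sset_chain f g key ((i : ℕ) + 1) ((j : ℕ) + 1) with hc | hc
    · -- Sset f (i+1) ⊆ Sset g (j+1); pick x ∈ Sset f (i+1) \ V
      obtain ⟨x, hx, hx'⟩ : ∃ x ∈ Sset f ((i : ℕ) + 1), x ∉ V := by
        by_contra h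
        push_neg at h
        exact absurd (Finset.card_le_card h) (by omega)
      have hxf : (f x : ℕ) < (i : ℕ) + 1 := mem_Sset.1 hx
      have hxf' : ¬ (f x : ℕ) < (i : ℕ) := fun hcon => hx' (hVf (mem_Sset.2 hcon))
      have hxg' : ¬ (g x : ℕ) < (j : ℕ) := fun hcon => hx' (hVg (mem_Sset.2 hcon))
      have hxg : (g x : ℕ) < (j : ℕ) + 1 := mem_Sset.1 (hc hx)
      exact ⟨x, Fin.ext (by omega), Fin.ext (by omega)⟩
    · -- Sset g (j+1) ⊆ Sset f (i+1); pick x ∈ Sset g (j+1) \ V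
      obtain ⟨x, hx, hx'⟩ : ∃ x ∈ Sset g ((j : ℕ) + 1), x ∉ V := by
        by_contra h
        push_neg at h
        exact absurd (Finset.card_le_card h) (by omega)
      have hxg : (g x : ℕ) < (j : ℕ) + 1 := mem_Sset.1 hx
      have hxf' : ¬ (f x : ℕ) < (i : ℕ) := fun hcon => hx' (hVf (mem_Sset.2 hcon))
      have hxg' : ¬ (g x : ℕ) < (j : ℕ) := fun hcon => hx' (hVg (mem_Sset.2 hcon))
      have hxf : (f x : ℕ) < (i : ℕ) + 1 := mem_Sset.1 (hc hx)
      exact ⟨x, Fin.ext (by omega), Fin.ext (by omega)⟩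

lemma psum_eq_card {N m : ℕ} (A : Fin m → Finset (Fin N)) (f : Fin N → Fin m)
    (hmem : ∀ x k, x ∈ A k ↔ f x = k) (t : ℕ) :
    psum A t = (Sset f t).card := by
  classical
  have hA : ∀ k, A k = Finset.univ.filter fun x => f x = k := by
    intro k; ext x; simp [hmem]
  have hU : Sset f t = (Finset.univ.filter fun k : Fin m => (k : ℕ) < t).biUnion
      (fun k => Finset.univ.filter fun x => f x = k) := by
    ext x
    simp only [mem_Sset, Finset.mem_biUnion, Finset.mem_filter, Finset.mem_univ, true_and]
    exact ⟨fun h => ⟨f x, h, rfl⟩, by rintro ⟨k, hk, rfl⟩; exact hk⟩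
  rw [psum, hU, Finset.card_biUnion]
  · exact Finset.sum_congr rfl fun k _ => by rw [hA]
  · intro a _ b _ hab
    simp only [Finset.disjoint_left, Finset.mem_filter, Finset.mem_univ, true_and]
    rintro x rfl h2
    exact hab h2

/-- For a non-crossing pair of ordered set partitions `B = (B₁,…,B_p)` and
`C = (C₁,…,C_q)` of `{0,…,n}`, intersection and inclusion of blocks are
characterized by partial sums of block sizes. -/
theorem noncrossing_block_intersection
    (n p q : ℕ)
    (B : Fin p → Finset (Fin (n + 1))) (C : Fin q → Finset (Fin (n + 1)))
    (hBne : ∀ i, (B i).Nonempty)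
    (hBdisj : ∀ i j, i ≠ j → Disjoint (B i) (B j))
    (hBcov : ∀ x : Fin (n + 1), ∃ i, x ∈ B i)
    (hCne : ∀ j, (C j).Nonempty)
    (hCdisj : ∀ i j, i ≠ j → Disjoint (C i) (C j))
    (hCcov : ∀ x : Fin (n + 1), ∃ j, x ∈ C j)
    (hnc : ¬ ∃ (i i' : Fin p) (j j' : Fin q), i < i' ∧ j < j' ∧
      (B i ∩ C j').Nonempty ∧ (B i' ∩ C j).Nonempty)
    (i : Fin p) (j : Fin q) :
    ((C j ∩ B i).Nonempty ↔
      psum C (j : ℕ) < psum B ((i : ℕ) + 1) ∧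
      psum B (i : ℕ) < psum C ((j : ℕ) + 1)) ∧
    (B i ⊆ C j ↔
      psum C (j : ℕ) ≤ psum B (i : ℕ) ∧
      psum B ((i : ℕ) + 1) ≤ psum C ((j : ℕ) + 1)) ∧
    (C j ⊆ B i ↔
      psum C ((j : ℕ) + 1) ≤ psum B ((i : ℕ) + 1) ∧
      psum B (i : ℕ) ≤ psum C (j : ℕ)) := by
  classical
  choose f hf using hBcov
  choose g hg using hCcov
  have hfB : ∀ x k, x ∈ B k ↔ f x = k := by
    intro x k
    constructor
    · intro h
      by_contra hne
      exact Finset.disjoint_left.1 (hBdisj (f x) k hne) (hf x) h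
    · rintro rfl; exact hf x
  have hgC : ∀ x k, x ∈ C k ↔ g x = k := by
    intro x k
    constructor
    · intro h
      by_contra hne
      exact Finset.disjoint_left.1 (hCdisj (g x) k hne) (hg x) h
    · rintro rfl; exact hg x
  have key : ∀ x y, f x < f y → g x ≤ g y := by
    intro x y hlt
    by_contra h
    push_neg at h
    exact hnc ⟨f x, f y, g y, g x, hlt, h,
      ⟨x, Finset.mem_inter.2 ⟨hf x, hg x⟩⟩,
      ⟨y, Finset.mem_inter.2 ⟨hf y, hg y⟩⟩⟩
  have key' : ∀ x y, g x < g y → f x ≤ f y :=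
    fun x y h => le_of_not_gt fun h' => absurd (key y x h') (not_le.2 h)
  have hfne : ∀ k, ∃ x, f x = k := fun k => by
    obtain ⟨x, hx⟩ := hBne k; exact ⟨x, (hfB x k).1 hx⟩
  have hgne : ∀ k, ∃ x, g x = k := fun k => by
    obtain ⟨x, hx⟩ := hCne k; exact ⟨x, (hgC x k).1 hx⟩
  have hpB : ∀ t, psum B t = (Sset f t).card := psum_eq_card B f hfB
  have hpC : ∀ t, psum C t = (Sset g t).card := psum_eq_card C g hgC
  rw [hpB, hpB, hpC, hpC]
  refine ⟨?_, ?_, ?_⟩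
  · rw [← aux_inter f g key key' hfne hgne i j]
    constructor
    · rintro ⟨x, hx⟩
      rw [Finset.mem_inter] at hx
      exact ⟨x, (hfB x i).1 hx.2, (hgC x j).1 hx.1⟩
    · rintro ⟨x, hfx, hgx⟩
      exact ⟨x, Finset.mem_inter.2 ⟨(hgC x j).2 hgx, (hfB x i).2 hfx⟩⟩
  · rw [← aux_subset f g key key' hfne i j]
    constructor
    · intro h x hx
      exact (hgC x j).1 (h ((hfB x i).2 hx))
    · intro h x hx
      exact (hgC x j).2 (h x ((hfB x i).1 hx))
  · rw [and_comm, ← aux_subset g f key' key hgne j i]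
    constructor
    · intro h x hx
      exact (hfB x i).1 (h ((hgC x j).2 hx))
    · intro h x hx
      exact (hfB x i).2 (h x ((hgC x j).1 hx))
end
end

section
/- For all integers p, q ≥ 1 with n = p + q, the generalized Eulerian polynomial of the poset T(p,q) satisfies A(T(p,q), t) = Σ_{i=0}^{y} C(n,i) (t^i + t^{i+1} + ⋯ + t^{n−i−1}) + Σ_{i=1}^{p−2} C(n, i+1) (t + t^2 + ⋯ + t^{n−i−2}) A_{i+1}(t), where y = min(1, p−1), C(·,·) denotes binomial coefficients, and the second sum is empty when p ≤ 2. -/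
noncomputable section

/-- `j` covers `i` in the order relation `r`. -/
def CoversRel {α : Type*} (r : α → α → Prop) (i j : α) : Prop :=
  r i j ∧ i ≠ j ∧ ∀ k, r i k → r k j → k = i ∨ k = j

/-- The number of ascents of an order relation `R` on `Fin N`: cover pairs
`(i, j)` with `j` covering `i` and `i < j` as integers. -/
def ascCount {N : ℕ} (R : Fin N → Fin N → Prop) : ℕ :=
  Nat.card {pq : Fin N × Fin N //
    CoversRel R pq.1 pq.2 ∧ (pq.1 : ℕ) < (pq.2 : ℕ)}

/-- The generalized Eulerian polynomial `A(Q,t)` of a poset `Q` on `[N]`: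
the sum of `t ^ asc(T)` over the distinct relabelings `T = σ(Q)` of `Q` by
permutations `σ` of `[N]`. -/
def genEuler {N : ℕ} (Q : Fin N → Fin N → Prop) (t : ℝ) : ℝ :=
  ∑ᶠ R ∈ {R : Fin N → Fin N → Prop |
      ∃ σ : Equiv.Perm (Fin N), R = fun i j => Q (σ.symm i) (σ.symm j)},
    t ^ ascCount R

/-- The partial order `T(p,q)` on `[p+q]` (0-indexed here): the chain
`1 < 2 < ⋯ < p` with the `q` elements `p+1, …, p+q` all placed above `p`
(and mutually incomparable). -/
def Trel (p q : ℕ) : Fin (p + q) → Fin (p + q) → Prop :=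
  fun i j => i = j ∨ ((i : ℕ) < p ∧ (i : ℕ) < (j : ℕ))

/-- The number of descents of a permutation `σ` of `[k]`. -/
def descount {k : ℕ} (σ : Equiv.Perm (Fin k)) : ℕ :=
  Nat.card {pq : Fin k × Fin k //
    (pq.2 : ℕ) = (pq.1 : ℕ) + 1 ∧ σ pq.2 < σ pq.1}

/-- The classical Eulerian polynomial `A_k(t) = ∑_{σ ∈ S_k} t^{des σ}`. -/
def Aeul (k : ℕ) (t : ℝ) : ℝ :=
  ∑ σ : Equiv.Perm (Fin k), t ^ descount σ

namespace TpqProof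

open Finset

open Classical in
def statA {p n : ℕ} (w : Fin (p+1) ↪ Fin n) : ℕ :=
  (Finset.univ.filter (fun u : Fin p => w u.castSucc < w u.succ)).card

open Classical in
def statB {p n : ℕ} (w : Fin (p+1) ↪ Fin n) : ℕ :=
  (Finset.univ.filter (fun j : Fin n => j ∉ Set.range w ∧ w (Fin.last p) < j)).card

def Rw {p n : ℕ} (w : Fin (p+1) ↪ Fin n) : Fin n → Fin n → Prop :=
  fun i j => i = j ∨ ∃ u, w u = i ∧ ∀ v ≤ u, w v ≠ j

lemma rw_antisymm {p n : ℕ} {w : Fin (p+1) ↪ Fin n} {i j : Fin n}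
    (hij : Rw w i j) (hji : Rw w j i) : i = j := by
  rcases hij with h | ⟨u1, hu1, hv1⟩
  · exact h
  rcases hji with h | ⟨u2, hu2, hv2⟩
  · exact h.symm
  rcases le_total u1 u2 with hle | hle
  · exact absurd hu1 (hv2 u1 hle)
  · exact absurd hu2 (hv1 u2 hle)

lemma rw_injective {p n : ℕ} {w w' : Fin (p+1) ↪ Fin n} (h : Rw w = Rw w') : w = w' := by
  have claim : ∀ u : Fin (p+1), (∀ v < u, w v = w' v) → w u = w' u := by
    intro u hv
    by_contra heq
    have h1 : Rw w (w u) (w' u) := by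
      refine Or.inr ⟨u, rfl, fun v hvu hc => ?_⟩
      rcases lt_or_eq_of_le hvu with hlt | rfl
      · exact absurd (w'.injective ((hv v hlt).symm.trans hc)) (ne_of_lt hlt)
      · exact heq hc
    have h2 : Rw w (w' u) (w u) := by
      rw [h]
      refine Or.inr ⟨u, rfl, fun v hvu hc => ?_⟩
      rcases lt_or_eq_of_le hvu with hlt | rfl
      · exact absurd (w.injective ((hv v hlt).trans hc)) (ne_of_lt hlt)
      · exact heq hc.symm
    exact heq (rw_antisymm h1 h2)
  have : ∀ m : ℕ, ∀ u : Fin (p+1), (u : ℕ) = m → w u = w' u := by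
    intro m
    induction m using Nat.strong_induction_on with
    | _ m ih =>
      intro u hu
      exact claim u (fun v hv => ih v (by omega) v rfl)
  ext u
  exact congrArg Fin.val (this (u : ℕ) u rfl)

lemma covers_rw_iff {p n : ℕ} (w : Fin (p+1) ↪ Fin n) (i j : Fin n) :
    CoversRel (Rw w) i j ↔
      ((∃ u : Fin p, w u.castSucc = i ∧ w u.succ = j) ∨
        (w (Fin.last p) = i ∧ j ∉ Set.range w)) := by
  constructor
  · rintro ⟨hij, hne, hmid⟩
    rcases hij with rfl | ⟨u, rfl, hv⟩
    · exact absurd rfl hne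
    rcases eq_or_lt_of_le (Fin.le_last u) with hlast | hlt
    · refine Or.inr ⟨by rw [hlast], ?_⟩
      rintro ⟨v, rfl⟩
      exact hv v (hlast ▸ Fin.le_last v) rfl
    · -- u < last p, so u = castSucc u0
      obtain ⟨u0, rfl⟩ : ∃ u0 : Fin p, u0.castSucc = u :=
        ⟨⟨(u : ℕ), by omega⟩, by ext; simp⟩
      left
      refine ⟨u0, rfl, ?_⟩
      by_contra hne2
      have h1 : Rw w (w u0.castSucc) (w u0.succ) := by
        refine Or.inr ⟨u0.castSucc, rfl, fun v hvu hc => ?_⟩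
        have := w.injective hc
        subst this
        exact absurd hvu (by simp [Fin.le_def])
      have h2 : Rw w (w u0.succ) j := by
        refine Or.inr ⟨u0.succ, rfl, fun v hvu hc => ?_⟩
        rcases eq_or_lt_of_le hvu with rfl | hvlt
        · exact hne2 hc
        · exact hv v (by simp [Fin.le_def]; simp [Fin.lt_def] at hvlt; omega) hc
      rcases hmid _ h1 h2 with hk | hk
      · exact absurd (w.injective hk) (by simp [Fin.ext_iff])
      · exact hne2 hk
  · rintro (⟨u, rfl, rfl⟩ | ⟨rfl, hj⟩)
    · refine ⟨Or.inr ⟨u.castSucc, rfl, fun v hvu hc => ?_⟩, fun hc => ?_, ?_⟩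
      · have := w.injective hc
        subst this
        exact absurd hvu (by simp [Fin.le_def])
      · exact absurd (w.injective hc) (by simp [Fin.ext_iff])
      · intro k hik hkj
        by_cases hki : k = w u.castSucc
        · exact Or.inl hki
        rcases hik with hik | ⟨u1, hu1, hv1⟩
        · exact Or.inl hik.symm
        have hu1' : u1 = u.castSucc := w.injective hu1
        subst hu1'
        rcases hkj with hkj | ⟨u2, hu2, hv2⟩
        · exact Or.inr hkj
        have hu2le : u2 ≤ u.castSucc := by
          by_contra hcon
          push_neg at hcon
          have : u.succ ≤ u2 := by
            simp [Fin.le_def]; simp [Fin.lt_def] at hcon; omega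
          exact hv2 u.succ this rfl
        exact absurd hu2 (fun hc => hv1 u2 hu2le hc)
    · refine ⟨Or.inr ⟨Fin.last p, rfl, fun v _ hc => hj ⟨v, hc⟩⟩, fun hc => hj ⟨Fin.last p, hc⟩, ?_⟩
      intro k hik hkj
      by_cases hki : k = w (Fin.last p)
      · exact Or.inl hki
      rcases hik with hik | ⟨u1, hu1, hv1⟩
      · exact Or.inl hik.symm
      have hu1' : u1 = Fin.last p := w.injective hu1
      subst hu1'
      have hk : k ∉ Set.range w := by
        rintro ⟨v, rfl⟩
        exact hv1 v (Fin.le_last v) rfl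
      rcases hkj with hkj | ⟨u2, hu2, hv2⟩
      · exact Or.inr hkj
      · exact absurd ⟨u2, hu2⟩ hk

lemma ascCount_rw {p n : ℕ} (w : Fin (p+1) ↪ Fin n) :
    ascCount (Rw w) = statA w + statB w := by
  classical
  have hcard : ascCount (Rw w) =
      (Finset.univ.filter (fun pq : Fin n × Fin n =>
        CoversRel (Rw w) pq.1 pq.2 ∧ (pq.1 : ℕ) < (pq.2 : ℕ))).card := by
    rw [ascCount, Nat.card_eq_fintype_card, Fintype.card_subtype]
  set F1 : Finset (Fin n × Fin n) :=
    (Finset.univ.filter (fun u : Fin p => w u.castSucc < w u.succ)).image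
      (fun u => (w u.castSucc, w u.succ)) with hF1
  set F2 : Finset (Fin n × Fin n) :=
    (Finset.univ.filter (fun j : Fin n => j ∉ Set.range w ∧ w (Fin.last p) < j)).image
      (fun j => (w (Fin.last p), j)) with hF2
  have hsplit : (Finset.univ.filter (fun pq : Fin n × Fin n =>
      CoversRel (Rw w) pq.1 pq.2 ∧ (pq.1 : ℕ) < (pq.2 : ℕ))) = F1 ∪ F2 := by
    ext pq
    simp only [Finset.mem_filter, Finset.mem_univ, true_and, Finset.mem_union, hF1, hF2,
      Finset.mem_image]
    constructor
    · rintro ⟨hcov, hlt⟩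
      rcases (covers_rw_iff w pq.1 pq.2).1 hcov with ⟨u, hu1, hu2⟩ | ⟨hi, hj⟩
      · exact Or.inl ⟨u, by simp [hu1, hu2, Fin.lt_def, hlt], by rw [hu1, hu2]⟩
      · exact Or.inr ⟨pq.2, by simp [hj, Fin.lt_def, hi, hlt], by rw [hi]⟩
    · rintro (⟨u, hu, hpq⟩ | ⟨j, hj, hpq⟩)
      · refine ⟨(covers_rw_iff w pq.1 pq.2).2 (Or.inl ⟨u, ?_, ?_⟩), ?_⟩
        · rw [← hpq]
        · rw [← hpq]
        · rw [← hpq]; exact hu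
      · refine ⟨(covers_rw_iff w pq.1 pq.2).2 (Or.inr ⟨?_, ?_⟩), ?_⟩
        · rw [← hpq]
        · rw [← hpq]; exact hj.1
        · rw [← hpq]; exact hj.2
  have hdisj : Disjoint F1 F2 := by
    rw [Finset.disjoint_left]
    rintro pq hpq1 hpq2
    simp only [hF1, hF2, Finset.mem_image, Finset.mem_filter] at hpq1 hpq2
    obtain ⟨u, _, hu⟩ := hpq1
    obtain ⟨j, ⟨_, hj, _⟩, hj2⟩ := hpq2
    apply hj
    refine ⟨u.succ, ?_⟩
    have : pq.2 = w u.succ := by rw [← hu]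
    have h2 : pq.2 = j := by rw [← hj2]
    rw [← h2, this]
  have hc1 : F1.card = statA w := by
    rw [hF1, Finset.card_image_of_injective _ (fun a b hab => ?_), statA]
    have := congrArg Prod.snd hab
    simp only at this
    exact Fin.succ_injective _ (w.injective this)
  have hc2 : F2.card = statB w := by
    rw [hF2, Finset.card_image_of_injective _ (fun a b hab => ?_), statB]
    exact congrArg Prod.snd hab
  rw [hcard, hsplit, Finset.card_union_of_disjoint hdisj, hc1, hc2]

lemma relabel_eq_rw {p q : ℕ} (σ : Equiv.Perm (Fin (p+1+q))) (w : Fin (p+1) ↪ Fin (p+1+q))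
    (h : ∀ u : Fin (p+1), σ ⟨u.1, by omega⟩ = w u) :
    (fun i j => Trel (p+1) q (σ.symm i) (σ.symm j)) = Rw w := by
  funext i j
  show (Trel (p+1) q (σ.symm i) (σ.symm j)) = Rw w i j
  rw [eq_iff_iff]
  unfold Trel Rw
  constructor
  · rintro (heq | ⟨ha, hb⟩)
    · exact Or.inl (by simpa using congrArg σ heq)
    · refine Or.inr ⟨⟨(σ.symm i : ℕ), ha⟩, ?_, ?_⟩
      · rw [← h ⟨(σ.symm i : ℕ), ha⟩]
        simp [Fin.ext_iff]
      · intro v hv hc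
        rw [← h v] at hc
        have : σ.symm j = ⟨v.1, by omega⟩ := by
          rw [← hc]; simp
        rw [this] at hb
        simp only [Fin.le_def] at hv
        simp only at hb
        omega
  · rintro (rfl | ⟨u, hu, hv⟩)
    · exact Or.inl rfl
    right
    have hsi : σ.symm i = ⟨u.1, by omega⟩ := by
      rw [← hu, ← h u]; simp
    constructor
    · rw [hsi]; exact u.2
    · rw [hsi]
      simp only
      by_contra hcon
      push_neg at hcon
      have hlt : ((σ.symm j : ℕ)) < p+1 := by omega
      have := hv ⟨(σ.symm j : ℕ), hlt⟩ (by simp [Fin.le_def]; omega)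
      rw [← h ⟨(σ.symm j : ℕ), hlt⟩] at this
      exact this (by simp [Fin.ext_iff])

open Classical in
lemma exists_extend {p q : ℕ} (w : Fin (p+1) ↪ Fin (p+1+q)) :
    ∃ σ : Equiv.Perm (Fin (p+1+q)), ∀ u : Fin (p+1), σ ⟨u.1, by omega⟩ = w u := by
  classical
  have hcard : Fintype.card {x : Fin (p+1+q) // ¬ x ∈ Set.range w} = q := by
    rw [Fintype.card_subtype_compl]
    have h1 : Fintype.card {x : Fin (p+1+q) // x ∈ Set.range w} = p+1 := by
      rw [Fintype.card_congr (Equiv.ofInjective w w.injective).symm, Fintype.card_fin]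
    rw [h1, Fintype.card_fin]
    omega
  let eR : Fin q ≃ {x : Fin (p+1+q) // ¬ x ∈ Set.range w} :=
    (Fintype.equivFinOfCardEq hcard).symm
  let σ : Equiv.Perm (Fin (p+1+q)) :=
    (finSumFinEquiv.symm.trans
      (((Equiv.ofInjective w w.injective).sumCongr eR).trans
        (Equiv.sumCompl (fun x => x ∈ Set.range w))))
  refine ⟨σ, fun u => ?_⟩
  have hcast : (⟨u.1, by omega⟩ : Fin (p+1+q)) = Fin.castAdd q u := by
    ext; simp
  show σ _ = w u
  rw [hcast]
  simp only [σ, Equiv.trans_apply, finSumFinEquiv_symm_apply_castAdd, Equiv.sumCongr_apply,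
    Sum.map_inl, Equiv.sumCompl_apply_inl]
  rfl

lemma set_eq (p q : ℕ) :
    {R : Fin (p+1+q) → Fin (p+1+q) → Prop |
      ∃ σ : Equiv.Perm (Fin (p+1+q)), R = fun i j => Trel (p+1) q (σ.symm i) (σ.symm j)} =
    Set.range (fun w : Fin (p+1) ↪ Fin (p+1+q) => Rw w) := by
  ext R
  simp only [Set.mem_setOf_eq, Set.mem_range]
  constructor
  · rintro ⟨σ, rfl⟩
    refine ⟨⟨fun u => σ ⟨u.1, by omega⟩, fun a b hab => ?_⟩, ?_⟩
    · have := σ.injective hab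
      simpa [Fin.ext_iff] using this
    · exact (relabel_eq_rw σ _ (fun u => rfl)).symm
  · rintro ⟨w, rfl⟩
    obtain ⟨σ, hσ⟩ := exists_extend w
    exact ⟨σ, (relabel_eq_rw σ w hσ).symm⟩

lemma genEuler_eq_sum (p q : ℕ) (t : ℝ) :
    genEuler (Trel (p+1) q) t =
      ∑ w : Fin (p+1) ↪ Fin (p+1+q), t ^ (statA w + statB w) := by
  rw [genEuler, set_eq p q,
    finsum_mem_range (fun w w' h => by rw [rw_injective h]),
    finsum_eq_sum_of_fintype]
  exact Finset.sum_congr rfl (fun w _ => by rw [ascCount_rw])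

open Classical in
lemma descount_eq {k : ℕ} (σ : Equiv.Perm (Fin (k+1))) :
    descount σ = (Finset.univ.filter (fun a : Fin k => σ a.succ < σ a.castSucc)).card := by
  classical
  rw [descount, Nat.card_eq_fintype_card, Fintype.card_subtype]
  refine Finset.card_bij' (fun pq hpq => ⟨(pq.1 : ℕ), ?_⟩)
    (fun a _ => (a.castSucc, a.succ)) ?_ ?_ ?_ ?_
  · simp only [Finset.mem_filter, Finset.mem_univ, true_and] at hpq
    have := pq.2.2
    omega
  · intro pq hpq
    simp only [Finset.mem_filter, Finset.mem_univ, true_and] at hpq ⊢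
    have h2 : (⟨(pq.1 : ℕ), by have := pq.2.2; omega⟩ : Fin k).succ = pq.2 := by
      ext; simp [hpq.1]
    have h1 : (⟨(pq.1 : ℕ), by have := pq.2.2; omega⟩ : Fin k).castSucc = pq.1 := by
      ext; simp
    rw [h1, h2]
    exact hpq.2
  · intro a ha
    simp only [Finset.mem_filter, Finset.mem_univ, true_and] at ha ⊢
    exact ⟨by simp, ha⟩
  · intro pq hpq
    simp only [Finset.mem_filter, Finset.mem_univ, true_and] at hpq
    ext <;> simp [hpq.1]
  · intro a ha
    ext; simp

lemma Aeul_one (t : ℝ) : Aeul 1 t = 1 := by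
  have hd : ∀ σ : Equiv.Perm (Fin 1), descount σ = 0 := by
    intro σ
    rw [descount]
    have : IsEmpty {pq : Fin 1 × Fin 1 // (pq.2 : ℕ) = (pq.1 : ℕ) + 1 ∧ σ pq.2 < σ pq.1} := by
      constructor
      rintro ⟨⟨a, b⟩, hab, -⟩
      have ha := a.2
      have hb := b.2
      omega
    simp [Nat.card_of_isEmpty]
  simp only [Aeul, hd, pow_zero]
  simp

lemma orderIso_congr {n k : ℕ} {S S' : Finset (Fin n)} (hSS : S = S') (h : S.card = k)
    (h' : S'.card = k) (x : Fin n) (hx : x ∈ S) (hx' : x ∈ S') :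
    (S.orderIsoOfFin h).symm ⟨x, hx⟩ = (S'.orderIsoOfFin h').symm ⟨x, hx'⟩ := by
  subst hSS; rfl

def wordOf {p n : ℕ} (S : Finset (Fin n)) (hS : S.card = p+1) (σ : Equiv.Perm (Fin (p+1))) :
    Fin (p+1) ↪ Fin n :=
  ⟨fun v => ↑(S.orderIsoOfFin hS (σ v.rev)),
   fun a b hab => by
    have h1 := (S.orderIsoOfFin hS).injective (Subtype.coe_injective hab)
    have h2 := σ.injective h1
    exact Fin.rev_injective h2⟩

lemma card_image_univ {p n : ℕ} (w : Fin (p+1) ↪ Fin n) :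
    (Finset.univ.image w).card = p+1 := by
  rw [Finset.card_image_of_injective _ w.injective, Finset.card_univ, Fintype.card_fin]

def permOf {p n : ℕ} (w : Fin (p+1) ↪ Fin n) : Equiv.Perm (Fin (p+1)) :=
  Equiv.ofBijective
    (fun v => ((Finset.univ.image w).orderIsoOfFin (card_image_univ w)).symm
      ⟨w v.rev, Finset.mem_image_of_mem _ (Finset.mem_univ _)⟩)
    (Finite.injective_iff_bijective.1 (fun a b hab => by
      have h1 := Subtype.mk_eq_mk.1 ((Finset.orderIsoOfFin _ _).symm.injective hab)
      exact Fin.rev_injective (w.injective h1)))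

lemma wordOf_apply {p n : ℕ} (S : Finset (Fin n)) (hS : S.card = p+1)
    (σ : Equiv.Perm (Fin (p+1))) (v : Fin (p+1)) :
    wordOf S hS σ v = ↑(S.orderIsoOfFin hS (σ v.rev)) := rfl

lemma permOf_apply {p n : ℕ} (w : Fin (p+1) ↪ Fin n) (v : Fin (p+1)) :
    permOf w v = ((Finset.univ.image w).orderIsoOfFin (card_image_univ w)).symm
      ⟨w v.rev, Finset.mem_image_of_mem _ (Finset.mem_univ _)⟩ := rfl

lemma statA_wordOf {p n : ℕ} (S : Finset (Fin n)) (hS : S.card = p+1)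
    (σ : Equiv.Perm (Fin (p+1))) : statA (wordOf S hS σ) = descount σ := by
  classical
  rw [descount_eq, statA]
  have hpt : ∀ u : Fin p, (wordOf S hS σ u.castSucc < wordOf S hS σ u.succ ↔
      σ u.rev.succ < σ u.rev.castSucc) := by
    intro u
    show ((S.orderIsoOfFin hS (σ u.castSucc.rev)) : Fin n) <
      ((S.orderIsoOfFin hS (σ u.succ.rev)) : Fin n) ↔ _
    rw [Subtype.coe_lt_coe, OrderIso.lt_iff_lt, Fin.rev_castSucc, Fin.rev_succ]
  refine Finset.card_bij' (fun u _ => u.rev) (fun u _ => u.rev) ?_ ?_ ?_ ?_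
  · intro u hu
    simp only [Finset.mem_filter, Finset.mem_univ, true_and] at hu ⊢
    exact (hpt u).1 hu
  · intro u hu
    simp only [Finset.mem_filter, Finset.mem_univ, true_and] at hu ⊢
    rw [hpt u.rev, Fin.rev_rev]
    exact hu
  · intro u _; exact Fin.rev_rev u
  · intro u _; exact Fin.rev_rev u

lemma sum_statA {p n : ℕ} (t : ℝ) :
    ∑ w : Fin (p+1) ↪ Fin n, t ^ statA w = (n.choose (p+1) : ℝ) * Aeul (p+1) t := by
  classical
  have hrhs : (n.choose (p+1) : ℝ) * Aeul (p+1) t =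
      ∑ x ∈ (Finset.powersetCard (p+1) (Finset.univ : Finset (Fin n)) ×ˢ
          (Finset.univ : Finset (Equiv.Perm (Fin (p+1))))),
        t ^ descount x.2 := by
    rw [Finset.sum_product]
    have h2 : ∀ S ∈ Finset.powersetCard (p+1) (Finset.univ : Finset (Fin n)),
        (∑ σ : Equiv.Perm (Fin (p+1)), t ^ descount σ) = Aeul (p+1) t := fun _ _ => rfl
    rw [Finset.sum_congr rfl h2, Finset.sum_const, Finset.card_powersetCard,
      Finset.card_univ, Fintype.card_fin, nsmul_eq_mul]
  rw [hrhs]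
  refine Finset.sum_bij'
    (i := fun (b : Finset (Fin n) × Equiv.Perm (Fin (p+1)))
      (hb : b ∈ Finset.powersetCard (p+1) (Finset.univ : Finset (Fin n)) ×ˢ
          (Finset.univ : Finset (Equiv.Perm (Fin (p+1))))) =>
      wordOf b.1 (Finset.mem_powersetCard_univ.1 (Finset.mem_product.1 hb).1) b.2)
    (j := fun w _ => (Finset.univ.image w, permOf w)) ?_ ?_ ?_ ?_ ?_ |>.symm
  · intro b hb
    exact Finset.mem_univ _
  · intro w _
    exact Finset.mem_product.2 ⟨Finset.mem_powersetCard_univ.2 (card_image_univ w),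
      Finset.mem_univ _⟩
  · intro b hb
    have hS : b.1.card = p + 1 := Finset.mem_powersetCard_univ.1 (Finset.mem_product.1 hb).1
    have himg : Finset.univ.image (wordOf b.1 hS b.2) = b.1 := by
      ext x
      simp only [Finset.mem_image, Finset.mem_univ, true_and]
      constructor
      · rintro ⟨v, rfl⟩
        exact (b.1.orderIsoOfFin hS _).2
      · intro hx
        refine ⟨((b.2.symm ((b.1.orderIsoOfFin hS).symm ⟨x, hx⟩))).rev, ?_⟩
        show ↑(b.1.orderIsoOfFin hS (b.2 _)) = x
        rw [Fin.rev_rev, Equiv.apply_symm_apply, OrderIso.apply_symm_apply]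
    refine Prod.ext himg ?_
    · ext v
      rw [permOf_apply]
      rw [orderIso_congr himg _ hS _ _ (by
        exact (b.1.orderIsoOfFin hS _).2)]
      simp only [wordOf_apply, Fin.rev_rev, Subtype.coe_eta, OrderIso.symm_apply_apply]
  · intro w _
    ext v
    simp only [wordOf_apply, permOf_apply, OrderIso.apply_symm_apply, Fin.rev_rev]
  · intro b hb
    rw [statA_wordOf]

open Classical in
lemma ext_sum {n : ℕ} (t : ℝ) (C : Finset (Fin n)) (hC : C.Nonempty) (l : Fin n) :
    ∑ x ∈ C, t ^ ((if l < x then 1 else 0) + (C.filter (fun c => x < c)).card) =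
      t ^ (C.filter (fun c => l < c)).card + ∑ j ∈ Icc 1 (C.card - 1), t ^ j := by
  classical
  obtain ⟨k, hk⟩ : ∃ k, C.card = k + 1 :=
    ⟨C.card - 1, by have := Finset.card_pos.2 hC; omega⟩
  clear hC
  induction k generalizing C with
  | zero =>
    obtain ⟨x0, rfl⟩ := Finset.card_eq_one.1 hk
    simp only [Finset.sum_singleton, Finset.filter_singleton, hk]
    have : ¬ (x0 < x0) := lt_irrefl x0
    by_cases hl : l < x0 <;> simp [this, hl]
  | succ k ih =>
    have hC : C.Nonempty := Finset.card_pos.1 (by omega)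
    set x0 := C.min' hC with hx0
    have hx0m : x0 ∈ C := C.min'_mem hC
    set C' := C.erase x0 with hC'
    have hkC' : C'.card = k + 1 := by
      rw [hC', Finset.card_erase_of_mem hx0m, hk]
      omega
    have hC'lt : ∀ x ∈ C', x0 < x := by
      intro x hx
      exact lt_of_le_of_ne (C.min'_le x (Finset.mem_of_mem_erase hx))
        (Ne.symm (Finset.ne_of_mem_erase hx))
    -- the inner filters agree on C'
    have hfil : ∀ x ∈ C', C.filter (fun c => x < c) = C'.filter (fun c => x < c) := by
      intro x hx
      ext c
      simp only [Finset.mem_filter, hC', Finset.mem_erase]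
      constructor
      · rintro ⟨hc, hxc⟩
        exact ⟨⟨fun hceq => absurd (hceq ▸ hxc) (not_lt_of_ge (le_of_lt (hC'lt x hx))), hc⟩, hxc⟩
      · rintro ⟨⟨_, hc⟩, hxc⟩
        exact ⟨hc, hxc⟩
    have hCfil : C.filter (fun c => x0 < c) = C' := by
      ext c
      simp only [Finset.mem_filter, hC', Finset.mem_erase]
      constructor
      · rintro ⟨hc, hxc⟩
        exact ⟨ne_of_gt hxc, hc⟩
      · rintro ⟨hne, hc⟩
        exact ⟨hc, lt_of_le_of_ne (C.min'_le c hc) (Ne.symm hne)⟩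
    have hsplit : ∑ x ∈ C, t ^ ((if l < x then 1 else 0) + (C.filter (fun c => x < c)).card)
        = t ^ ((if l < x0 then 1 else 0) + (k+1)) +
          ∑ x ∈ C', t ^ ((if l < x then 1 else 0) + (C'.filter (fun c => x < c)).card) := by
      rw [← Finset.add_sum_erase _ _ hx0m, hCfil, hkC']
      congr 1
      exact Finset.sum_congr rfl (fun x hx => by rw [hfil x hx])
    have hm : (C.filter (fun c => l < c)).card =
        (C'.filter (fun c => l < c)).card + (if l < x0 then 1 else 0) := by
      have : C = insert x0 C' := by
        rw [hC', Finset.insert_erase hx0m]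
      rw [this, Finset.filter_insert]
      by_cases hl : l < x0
      · rw [if_pos hl, Finset.card_insert_of_notMem (fun hc => by
          exact absurd (Finset.mem_of_mem_erase (Finset.mem_of_mem_filter _ hc)) 
            (by rw [hC'] at hc; exact fun _ => Finset.notMem_erase x0 C (Finset.mem_of_mem_filter _ hc))), if_pos hl]
      · rw [if_neg hl, if_neg hl, add_zero]
    rw [hsplit, ih C' hkC', hm, hk, hkC']
    simp only [Nat.add_sub_cancel]
    have hgeom : ∑ j ∈ Icc 1 (k + 1), t ^ j = (∑ j ∈ Icc 1 k, t ^ j) + t ^ (k+1) :=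
      Finset.sum_Icc_succ_top (by omega) _
    rw [hgeom]
    by_cases hl : l < x0
    · have hmall : C'.filter (fun c => l < c) = C' :=
        Finset.filter_true_of_mem (fun x hx => lt_trans hl (hC'lt x hx))
      rw [if_pos hl, hmall, hkC']
      ring
    · rw [if_neg hl]
      ring

def snocEmb {p n : ℕ} (u : Fin (p+1) ↪ Fin n) (x : Fin n) (hx : x ∉ Set.range u) :
    Fin (p+2) ↪ Fin n :=
  ⟨Fin.snoc u x, by
    intro a b hab
    induction a using Fin.lastCases with
    | last =>
      induction b using Fin.lastCases with
      | last => rfl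
      | cast b =>
        rw [Fin.snoc_last, Fin.snoc_castSucc] at hab
        exact absurd ⟨b, hab.symm⟩ hx
    | cast a =>
      induction b using Fin.lastCases with
      | last =>
        rw [Fin.snoc_last, Fin.snoc_castSucc] at hab
        exact absurd ⟨a, hab⟩ hx
      | cast b =>
        rw [Fin.snoc_castSucc, Fin.snoc_castSucc] at hab
        rw [u.injective hab]⟩

@[simp] lemma snocEmb_apply {p n : ℕ} (u : Fin (p+1) ↪ Fin n) (x : Fin n)
    (hx : x ∉ Set.range u) (v : Fin (p+2)) : snocEmb u x hx v = Fin.snoc (α := fun _ => Fin n) (⇑u) x v := rfl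

lemma snocEmb_last {p n : ℕ} (u : Fin (p+1) ↪ Fin n) (x : Fin n) (hx : x ∉ Set.range u) :
    snocEmb u x hx (Fin.last (p+1)) = x := by
  rw [snocEmb_apply, Fin.snoc_last]

lemma snocEmb_castSucc {p n : ℕ} (u : Fin (p+1) ↪ Fin n) (x : Fin n) (hx : x ∉ Set.range u)
    (v : Fin (p+1)) : snocEmb u x hx v.castSucc = u v := by
  rw [snocEmb_apply, Fin.snoc_castSucc]

lemma range_snocEmb {p n : ℕ} (u : Fin (p+1) ↪ Fin n) (x : Fin n) (hx : x ∉ Set.range u)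
    (j : Fin n) : j ∈ Set.range (snocEmb u x hx) ↔ j ∈ Set.range u ∨ j = x := by
  constructor
  · rintro ⟨v, rfl⟩
    induction v using Fin.lastCases with
    | last => right; exact snocEmb_last u x hx
    | cast v => left; exact ⟨v, (snocEmb_castSucc u x hx v).symm⟩
  · rintro (⟨v, rfl⟩ | rfl)
    · exact ⟨v.castSucc, snocEmb_castSucc u x hx v⟩
    · exact ⟨Fin.last (p+1), snocEmb_last u j hx⟩

open Classical in
lemma statA_snocEmb {p n : ℕ} (u : Fin (p+1) ↪ Fin n) (x : Fin n) (hx : x ∉ Set.range u) :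
    statA (snocEmb u x hx) = statA u + (if u (Fin.last p) < x then 1 else 0) := by
  classical
  rw [statA, statA, Finset.card_filter, Finset.card_filter, Fin.sum_univ_castSucc]
  congr 1
  · refine Finset.sum_congr rfl (fun v _ => ?_)
    have h1 : snocEmb u x hx v.castSucc.castSucc = u v.castSucc :=
      snocEmb_castSucc u x hx v.castSucc
    have h2 : snocEmb u x hx v.castSucc.succ = u v.succ := by
      rw [Fin.succ_castSucc]
      exact snocEmb_castSucc u x hx v.succ
    rw [h1, h2]
  · have h1 : snocEmb u x hx (Fin.last p).castSucc = u (Fin.last p) :=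
      snocEmb_castSucc u x hx (Fin.last p)
    have h2 : snocEmb u x hx (Fin.last p).succ = x := by
      rw [Fin.succ_last]
      exact snocEmb_last u x hx
    rw [h1, h2]

open Classical in
lemma statB_snocEmb {p n : ℕ} (u : Fin (p+1) ↪ Fin n) (x : Fin n) (hx : x ∉ Set.range u) :
    statB (snocEmb u x hx) =
      ((Finset.univ.filter (fun j : Fin n => j ∉ Set.range u)).filter
        (fun c => x < c)).card := by
  classical
  rw [statB, Finset.filter_filter]
  congr 1
  apply Finset.filter_congr
  intro j _
  rw [snocEmb_last u x hx]
  constructor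
  · rintro ⟨hj, hlt⟩
    rw [range_snocEmb u x hx j] at hj
    push_neg at hj
    exact ⟨hj.1, hlt⟩
  · rintro ⟨hj, hlt⟩
    refine ⟨?_, hlt⟩
    rw [range_snocEmb u x hx j]
    rintro (h | rfl)
    · exact hj h
    · exact absurd hlt (lt_irrefl j)

def initEmb {p n : ℕ} (w : Fin (p+2) ↪ Fin n) : Fin (p+1) ↪ Fin n :=
  ⟨fun v => w v.castSucc, fun a b hab => Fin.castSucc_injective _ (w.injective hab)⟩

lemma last_not_mem_range_init {p n : ℕ} (w : Fin (p+2) ↪ Fin n) :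
    w (Fin.last (p+1)) ∉ Set.range (initEmb w) := by
  rintro ⟨v, hv⟩
  have := w.injective hv
  exact absurd this (Fin.ne_last_of_lt (Fin.castSucc_lt_last v))

open Classical in
lemma rec_step (p n : ℕ) (h : p + 2 ≤ n) (t : ℝ) :
    ∑ w : Fin (p+1+1) ↪ Fin n, t ^ (statA w + statB w) =
      (∑ w : Fin (p+1) ↪ Fin n, t ^ (statA w + statB w)) +
        (n.choose (p+1) : ℝ) * (∑ j ∈ Icc 1 (n-p-2), t ^ j) * Aeul (p+1) t := by
  classical
  have hbij : ∑ w : Fin (p+1+1) ↪ Fin n, t ^ (statA w + statB w) =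
      ∑ b ∈ (Finset.univ : Finset ((Fin (p+1) ↪ Fin n) × Fin n)).filter
          (fun b => b.2 ∉ Set.range b.1),
        t ^ (statA b.1 + ((if b.1 (Fin.last p) < b.2 then 1 else 0) +
          ((Finset.univ.filter (fun j : Fin n => j ∉ Set.range b.1)).filter
            (fun c => b.2 < c)).card)) := by
    refine Finset.sum_bij'
      (i := fun w _ => (initEmb w, w (Fin.last (p+1))))
      (j := fun b hb => snocEmb b.1 b.2 (Finset.mem_filter.1 hb).2) ?_ ?_ ?_ ?_ ?_
    · intro w _
      exact Finset.mem_filter.2 ⟨Finset.mem_univ _, last_not_mem_range_init w⟩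
    · intro b hb
      exact Finset.mem_univ _
    · intro w hw
      refine DFunLike.ext _ _ fun v => ?_
      induction v using Fin.lastCases with
      | last => exact snocEmb_last _ _ _
      | cast v => exact snocEmb_castSucc _ _ _ v
    · intro b hb
      refine Prod.ext ?_ ?_
      · refine DFunLike.ext _ _ fun v => ?_
        exact snocEmb_castSucc b.1 b.2 (Finset.mem_filter.1 hb).2 v
      · exact snocEmb_last b.1 b.2 (Finset.mem_filter.1 hb).2
    · intro w hw
      have hrw : snocEmb (initEmb w) (w (Fin.last (p+1))) (last_not_mem_range_init w) = w := by
        refine DFunLike.ext _ _ fun v => ?_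
        induction v using Fin.lastCases with
        | last => exact snocEmb_last (initEmb w) _ (last_not_mem_range_init w)
        | cast v => exact snocEmb_castSucc (initEmb w) _ (last_not_mem_range_init w) v
      conv_lhs => rw [← hrw]
      rw [statA_snocEmb, statB_snocEmb]
      ring_nf
  rw [hbij]
  rw [Finset.sum_filter]
  rw [Fintype.sum_prod_type]
  have hinner : ∀ u : Fin (p+1) ↪ Fin n,
      (∑ x : Fin n, if x ∉ Set.range u then
        t ^ (statA u + ((if u (Fin.last p) < x then 1 else 0) +
          ((Finset.univ.filter (fun j : Fin n => j ∉ Set.range u)).filter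
            (fun c => x < c)).card)) else 0) =
      t ^ (statA u + statB u) + t ^ statA u * ∑ j ∈ Icc 1 (n-p-2), t ^ j := by
    intro u
    rw [← Finset.sum_filter]
    set C := Finset.univ.filter (fun j : Fin n => j ∉ Set.range u) with hCdef
    have hCcard : C.card = n - (p+1) := by
      have : C = (Finset.univ.image u)ᶜ := by
        ext j
        simp [hCdef, Set.mem_range]
      rw [this, Finset.card_compl, card_image_univ, Fintype.card_fin]
    have hCne : C.Nonempty := Finset.card_pos.1 (by omega)
    have hpow : ∀ x ∈ C, t ^ (statA u + ((if u (Fin.last p) < x then 1 else 0) +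
        (C.filter (fun c => x < c)).card)) =
        t ^ statA u * t ^ ((if u (Fin.last p) < x then 1 else 0) +
          (C.filter (fun c => x < c)).card) := fun x _ => by rw [← pow_add]
    rw [Finset.sum_congr rfl hpow, ← Finset.mul_sum,
      ext_sum t C hCne (u (Fin.last p)), hCcard]
    have hstatB : statB u = (C.filter (fun c => u (Fin.last p) < c)).card := by
      rw [statB, hCdef, Finset.filter_filter]
    rw [← hstatB]
    have harith : n - (p+1) - 1 = n - p - 2 := by omega
    rw [harith, mul_add, ← pow_add]
  rw [Finset.sum_congr rfl (fun u _ => hinner u), Finset.sum_add_distrib]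
  congr 1
  rw [← Finset.sum_mul, sum_statA]
  ring


open Classical in
lemma sum_base (n : ℕ) (hn : 1 ≤ n) (t : ℝ) :
    ∑ w : Fin 1 ↪ Fin n, t ^ (statA w + statB w) = ∑ j ∈ Icc 0 (n-1), t ^ j := by
  classical
  have hA : ∀ w : Fin 1 ↪ Fin n, statA w = 0 := by
    intro w
    rw [statA]
    simp
  have hB : ∀ w : Fin 1 ↪ Fin n, statB w = n - 1 - (w 0 : ℕ) := by
    intro w
    rw [statB]
    have hfil : Finset.univ.filter (fun j : Fin n => j ∉ Set.range w ∧ w (Fin.last 0) < j)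
        = (Finset.Iic (w 0))ᶜ := by
      ext j
      simp only [Finset.mem_filter, Finset.mem_univ, true_and, Finset.mem_compl,
        Finset.mem_Iic, not_le]
      have hlast : Fin.last 0 = 0 := rfl
      constructor
      · rintro ⟨-, hlt⟩
        rw [hlast] at hlt
        exact hlt
      · intro hlt
        refine ⟨?_, by rw [hlast]; exact hlt⟩
        rintro ⟨v, rfl⟩
        have : v = 0 := Subsingleton.elim v 0
        rw [this] at hlt
        exact lt_irrefl _ hlt
    rw [hfil, Finset.card_compl, Fin.card_Iic, Fintype.card_fin]
    omega
  have hbij : ∑ w : Fin 1 ↪ Fin n, t ^ (statA w + statB w) =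
      ∑ c : Fin n, t ^ (n - 1 - (c : ℕ)) := by
    refine Finset.sum_bij' (i := fun w _ => w 0)
      (j := fun c _ => ⟨fun _ => c, fun a b _ => Subsingleton.elim a b⟩)
      (fun _ _ => Finset.mem_univ _) (fun _ _ => Finset.mem_univ _) ?_ ?_ ?_
    · intro w _
      refine DFunLike.ext _ _ fun v => ?_
      have : v = 0 := Subsingleton.elim v 0
      rw [this]
      rfl
    · intro c _
      rfl
    · intro w _
      simp [hA, hB]
  rw [hbij, Fin.sum_univ_eq_sum_range (fun c => t ^ (n - 1 - c)) n]
  have hrefl : ∑ c ∈ range n, t ^ (n - 1 - c) = ∑ c ∈ range n, t ^ c :=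
    Finset.sum_range_reflect (fun c => t ^ c) n
  rw [hrefl]
  congr 1
  ext j
  simp only [Finset.mem_Icc, Finset.mem_range]
  omega

lemma master (p : ℕ) : ∀ n : ℕ, p + 2 ≤ n → ∀ t : ℝ,
    ∑ w : Fin (p+1) ↪ Fin n, t ^ (statA w + statB w) =
      (∑ j ∈ Icc 0 (n-1), t ^ j) +
        ∑ i ∈ Icc 1 p, (n.choose i : ℝ) * (∑ j ∈ Icc 1 (n-i-1), t ^ j) * Aeul i t := by
  induction p with
  | zero =>
    intro n hn t
    rw [sum_base n (by omega) t]
    simp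
  | succ p ih =>
    intro n hn t
    rw [rec_step p n (by omega) t, ih n (by omega) t,
      Finset.sum_Icc_succ_top (by omega : 1 ≤ p+1)]
    have h1 : n - (p+1) - 1 = n - p - 2 := by omega
    rw [h1]
    ring

end TpqProof

open TpqProof Finset

/-- For `p, q ≥ 1` and `n = p + q`,
`A(T(p,q),t) = ∑_{i=0}^{y} C(n,i)(tⁱ + ⋯ + t^{n-i-1})
  + ∑_{i=1}^{p-2} C(n,i+1)(t + ⋯ + t^{n-i-2}) A_{i+1}(t)`,
with `y = min 1 (p-1)`. -/
theorem genEuler_Tpq_formula (p q : ℕ) (hp : 1 ≤ p) (hq : 1 ≤ q) (t : ℝ) :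
    genEuler (Trel p q) t =
      (∑ i ∈ Finset.range (min 1 (p - 1) + 1),
        ((p + q).choose i : ℝ) * ∑ j ∈ Finset.Icc i (p + q - i - 1), t ^ j) +
      ∑ i ∈ Finset.Icc 1 (p - 2),
        ((p + q).choose (i + 1) : ℝ) *
          (∑ j ∈ Finset.Icc 1 (p + q - i - 2), t ^ j) * Aeul (i + 1) t := by
  obtain ⟨P, rfl⟩ : ∃ P, p = P + 1 := ⟨p - 1, by omega⟩
  rw [genEuler_eq_sum P q t, master P (P+1+q) (by omega) t]
  rcases Nat.eq_zero_or_pos P with rfl | hP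
  · simp
  obtain ⟨P', rfl⟩ : ∃ P', P = P' + 1 := ⟨P - 1, by omega⟩
  have hmin : min 1 (P' + 1 + 1 - 1) = 1 := by omega
  rw [hmin]
  have hfirst : ∑ i ∈ Finset.range 2,
      ((P' + 1 + 1 + q).choose i : ℝ) * ∑ j ∈ Finset.Icc i (P' + 1 + 1 + q - i - 1), t ^ j =
      (∑ j ∈ Icc 0 (P' + 1 + 1 + q - 1), t ^ j) +
        ((P' + 1 + 1 + q : ℕ) : ℝ) * ∑ j ∈ Finset.Icc 1 (P' + 1 + 1 + q - 1 - 1), t ^ j := by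
    rw [Finset.sum_range_succ, Finset.sum_range_one]
    simp [Nat.choose_one_right]
  rw [hfirst]
  have hsplit : Icc 1 (P' + 1) = insert 1 (Icc 2 (P' + 1)) := by
    ext i
    simp only [Finset.mem_Icc, Finset.mem_insert]
    omega
  rw [hsplit, Finset.sum_insert (by simp)]
  have h1term : ((P' + 1 + 1 + q).choose 1 : ℝ) *
      (∑ j ∈ Icc 1 (P' + 1 + 1 + q - 1 - 1), t ^ j) * Aeul 1 t =
      ((P' + 1 + 1 + q : ℕ) : ℝ) * ∑ j ∈ Finset.Icc 1 (P' + 1 + 1 + q - 1 - 1), t ^ j := by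
    rw [Aeul_one, Nat.choose_one_right, mul_one]
  rw [h1term]
  have hre : ∑ i ∈ Icc 2 (P' + 1),
      ((P' + 1 + 1 + q).choose i : ℝ) * (∑ j ∈ Icc 1 (P' + 1 + 1 + q - i - 1), t ^ j) * Aeul i t
      = ∑ i ∈ Finset.Icc 1 (P' + 1 + 1 - 2),
        ((P' + 1 + 1 + q).choose (i + 1) : ℝ) *
          (∑ j ∈ Finset.Icc 1 (P' + 1 + 1 + q - i - 2), t ^ j) * Aeul (i + 1) t := by
    refine Finset.sum_nbij' (i := fun i => i - 1) (j := fun i => i + 1) ?_ ?_ ?_ ?_ ?_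
    · intro a ha
      simp only [Finset.mem_Icc] at ha ⊢
      omega
    · intro a ha
      simp only [Finset.mem_Icc] at ha ⊢
      omega
    · intro a ha
      simp only [Finset.mem_Icc] at ha
      show a - 1 + 1 = a
      omega
    · intro a ha
      simp only [Finset.mem_Icc] at ha
      show a + 1 - 1 = a
      omega
    · intro a ha
      simp only [Finset.mem_Icc] at ha
      obtain ⟨k, rfl⟩ : ∃ k, a = k + 2 := ⟨a - 2, by omega⟩
      have e2 : P' + 1 + 1 + q - (k + 2) - 1 = P' + 1 + 1 + q - (k + 1) - 2 := by omega
      simp only [show ((fun i : ℕ => i - 1) (k + 2)) = k + 1 from rfl]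
      rw [← e2]
  rw [hre]
  ring
end
end
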